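/- arXiv:0712.1269 — 2 statements merged into one kernel-verified Lean document; each statement's English description precedes it below -/
import Mathlib

section
/- A nonempty good face of the graphical traveling salesman polyhedron P is uniquely determined by the set of Hamiltonian cycles it contains together with its set of feasible shortcuts: if F and G are nonempty good faces of P (each defined by a valid inequality) such that (i) for every Hamiltonian cycle C on V, χ^{E(C)} ∈ F if and only if χ^{E(C)} ∈ G, and (ii) for every rooted triangle (u,vw), s_{u,vw} ∈ direc F if and only if s_{u,vw} ∈ direc G, then F = G. -/
open scoped BigOperators

abbrev Edge (n : ℕ) := {e : Sym2 (Fin n) // ¬ e.IsDiag}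

namespace TSP
variable {n : ℕ}
noncomputable section

def dot (a x : Edge n → ℝ) : ℝ := ∑ e, a e * x e
def ev (a : Edge n → ℝ) (u v : Fin n) : ℝ :=
  if h : u = v then 0 else a ⟨s(u, v), fun hd => h (Sym2.mk_isDiag_iff.mp hd)⟩
def indic (u v : Fin n) : Edge n → ℝ := fun e => if e.val = s(u, v) then 1 else 0
def delta (u : Fin n) : Edge n → ℝ := fun e => if u ∈ e.val then 1/2 else 0
def RootedTri (u v w : Fin n) : Prop := v ≠ w ∧ u ≠ v ∧ u ≠ w
def tri (a : Edge n → ℝ) (u v w : Fin n) : ℝ := ev a v u + ev a u w - ev a v w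
def IsMetric (a : Edge n → ℝ) : Prop := ∀ u v w, RootedTri u v w → 0 ≤ tri a u v w
def IsTT (a : Edge n → ℝ) : Prop :=
  IsMetric a ∧ ∀ u, ∃ v w, RootedTri u v w ∧ tri a u v w = 0
def lam (a : Edge n → ℝ) (u : Fin n) : ℝ :=
  sInf {r | ∃ v w, RootedTri u v w ∧ r = tri a u v w}
def theta (a : Edge n → ℝ) : Edge n → ℝ := fun e => a e - ∑ u, lam a u * delta u e
def zvec (n : ℕ) : Edge n → ℝ := fun _ => 2 / ((n : ℝ) - 1)
def gamma (a : Edge n → ℝ) : ℝ := -1 + dot a (zvec n) - ∑ u, lam a u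
def nextF (i : Fin n) : Fin n := ⟨(i.val + 1) % n, Nat.mod_lt _ i.pos⟩
def hamVec (σ : Equiv.Perm (Fin n)) : Edge n → ℝ :=
  fun e => if ∃ i : Fin n, e.val = s(σ i, σ (nextF i)) then 1 else 0
def stsp (n : ℕ) : Set (Edge n → ℝ) :=
  convexHull ℝ {x | ∃ σ : Equiv.Perm (Fin n), x = hamVec σ}
def degree (x : Edge n → ℝ) (u : Fin n) : ℝ := ∑ e, if u ∈ e.val then x e else 0
lemma ev_symm (a : Edge n → ℝ) (u v : Fin n) : ev a u v = ev a v u := by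
  unfold ev
  rcases eq_or_ne u v with h | h
  · subst h; simp
  · rw [dif_neg h, dif_neg (Ne.symm h)]
    congr 1
    exact Subtype.ext (Sym2.eq_swap)
def supportGraph (x : Edge n → ℝ) : SimpleGraph (Fin n) where
  Adj u v := u ≠ v ∧ 0 < ev x u v
  symm := ⟨fun u v h => ⟨h.1.symm, by rw [ev_symm]; exact h.2⟩⟩
  loopless := ⟨fun u h => h.1 rfl⟩
def IsEulerian (x : Edge n → ℝ) : Prop :=
  (∀ e, ∃ m : ℕ, x e = m) ∧ (supportGraph x).Connected ∧
    ∀ u, ∃ m : ℕ, 0 < m ∧ degree x u = 2 * m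
def gtsp (n : ℕ) : Set (Edge n → ℝ) := convexHull ℝ {x | IsEulerian x}
def IsFaceOf (Q F : Set (Edge n → ℝ)) : Prop :=
  ∃ a α, (∀ x ∈ Q, α ≤ dot a x) ∧ F = {x ∈ Q | dot a x = α}
def IsGood (F : Set (Edge n → ℝ)) : Prop := ∀ e : Edge n, ∃ x ∈ F, 0 < x e
def adim (X : Set (Edge n → ℝ)) : ℕ := Module.finrank ℝ (affineSpan ℝ X).direction
def direc (F : Set (Edge n → ℝ)) : Submodule ℝ (Edge n → ℝ) :=
  Submodule.span ℝ {d | ∃ x ∈ F, ∃ y ∈ F, d = y - x}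
def shortcut (u v w : Fin n) : Edge n → ℝ :=
  fun e => indic v w e - indic v u e - indic u w e
def gtspPolar (n : ℕ) : Set (Edge n → ℝ) := {b | ∀ x ∈ gtsp n, 1 ≤ dot b x}

/-- The face of `S` defined by `a ∈ D_S`. -/
def faceS (a : Edge n → ℝ) : Set (Edge n → ℝ) :=
  {x ∈ stsp n | dot a x = dot a (zvec n) - 1}

/-- `D_S`: the points `a ∈ L` whose inequality `a·x ≥ a·z − 1` is valid for `S`
and defines a nonempty good face of `S`. -/
def DS (n : ℕ) : Set (Edge n → ℝ) :=
  {a | (∀ u, dot (delta u) a = 0) ∧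
       (∀ x ∈ stsp n, dot a (zvec n) - 1 ≤ dot a x) ∧
       (faceS a).Nonempty ∧ IsGood (faceS a)}

/-- `D_P`: TT points of `P^△` defining nonempty good faces of `P`. -/
def DP (n : ℕ) : Set (Edge n → ℝ) :=
  {b | b ∈ gtspPolar n ∧ IsTT b ∧
       ({x ∈ gtsp n | dot b x = 1}).Nonempty ∧ IsGood {x ∈ gtsp n | dot b x = 1}}

/-- `𝔉(a)`: faces of `P` definable by rotated versions of `a·x ≥ a·z − 1`. -/
def Frot (a : Edge n → ℝ) : Set (Set (Edge n → ℝ)) :=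
  {F | ∃ ξ : Fin n → ℝ,
    (∀ x ∈ gtsp n,
      dot a (zvec n) - 1 + dot (∑ u, ξ u • delta u) (zvec n)
        ≤ dot (a + ∑ u, ξ u • delta u) x) ∧
    F = {x ∈ gtsp n |
      dot (a + ∑ u, ξ u • delta u) x
        = dot a (zvec n) - 1 + dot (∑ u, ξ u • delta u) (zvec n)}}

/-- `E^u(a)`: the edges achieving the minimal triangle slack rooted at `u`. -/
def Eu (a : Edge n → ℝ) (u : Fin n) : Set (Edge n) :=
  {e | ∃ v w, RootedTri u v w ∧ e.val = s(v, w) ∧ tri a u v w = lam a u}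

def IsFacetP (n : ℕ) (G : Set (Edge n → ℝ)) : Prop :=
  IsFaceOf (gtsp n) G ∧ adim G = n * (n - 1) / 2 - 1
def IsFacetS (n : ℕ) (F : Set (Edge n → ℝ)) : Prop :=
  IsFaceOf (stsp n) F ∧ adim F + 1 = adim (stsp n)
def IsNRFacet (n : ℕ) (G : Set (Edge n → ℝ)) : Prop :=
  IsFacetP n G ∧ IsFacetS n (G ∩ stsp n)
def IsDegreeFacet (n : ℕ) (G : Set (Edge n → ℝ)) : Prop :=
  ∃ u, G = {x ∈ gtsp n | dot (delta u) x = 1}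
def IsNonNegFacet (n : ℕ) (G : Set (Edge n → ℝ)) : Prop :=
  ∃ e : Edge n, G = {x ∈ gtsp n | x e = 0}
def IsNonNRFacet (n : ℕ) (G : Set (Edge n → ℝ)) : Prop :=
  IsFacetP n G ∧ IsGood G ∧ ¬ IsDegreeFacet n G ∧
    adim (G ∩ stsp n) + 1 < adim (stsp n)

/-- Solution set of the relaxation `R_B` (degree inequalities). -/
def RBge {k : ℕ} (n : ℕ) (b : Fin k → Edge n → ℝ) : Set (Edge n → ℝ) :=
  {x | (∀ j, 1 ≤ dot (b j) x) ∧ (∀ v, 1 ≤ dot (delta v) x) ∧ ∀ e, 0 ≤ x e}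

/-- Solution set of `R_B` with degree equations. -/
def RBeq {k : ℕ} (n : ℕ) (b : Fin k → Edge n → ℝ) : Set (Edge n → ℝ) :=
  {x | (∀ j, 1 ≤ dot (b j) x) ∧ (∀ v, dot (delta v) x = 1) ∧ ∀ e, 0 ≤ x e}

/-- The parsimonious property of the relaxation `R_B`. -/
def Parsimonious {k : ℕ} (n : ℕ) (b : Fin k → Edge n → ℝ) : Prop :=
  ∀ c : Edge n → ℝ, IsMetric c →
    sInf (dot c '' RBge n b) = sInf (dot c '' RBeq n b)

/-- Adjacency in the ridge graph of `P`. -/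
def RidgeAdj (n : ℕ) (F G : Set (Edge n → ℝ)) : Prop :=
  IsFacetP n F ∧ IsFacetP n G ∧ F ≠ G ∧ adim (F ∩ G) = n * (n - 1) / 2 - 2

/-- `q_I = Σ_{u ∉ I} δ_u`. -/
def qI (n : ℕ) (I : Finset (Fin n)) : Edge n → ℝ := ∑ u ∈ Iᶜ, delta u

/-- The face `G_I` of `P`. -/
def GI (n : ℕ) (a : Edge n → ℝ) (I : Finset (Fin n)) : Set (Edge n → ℝ) :=
  {x ∈ gtsp n | dot (theta a + qI n I) x = gamma a + dot (qI n I) (zvec n)}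

end

section Aux11
open Finset

variable {n : ℕ}

def mkE {u v : Fin n} (h : u ≠ v) : Edge n :=
  ⟨s(u, v), fun hd => h (Sym2.mk_isDiag_iff.mp hd)⟩

lemma mkE_val {u v : Fin n} (h : u ≠ v) : (mkE h).val = s(u, v) := rfl

lemma mkE_symm {u v : Fin n} (h : u ≠ v) : mkE h.symm = mkE h :=
  Subtype.ext Sym2.eq_swap

lemma ev_of_ne (a : Edge n → ℝ) {u v : Fin n} (h : u ≠ v) : ev a u v = a (mkE h) :=
  dif_neg h

lemma ev_self (a : Edge n → ℝ) (u : Fin n) : ev a u u = 0 := dif_pos rfl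

lemma ev_add (a b : Edge n → ℝ) (u v : Fin n) :
    ev (a + b) u v = ev a u v + ev b u v := by
  unfold ev
  rcases eq_or_ne u v with h | h
  · simp [h]
  · rw [dif_neg h, dif_neg h, dif_neg h]; rfl

lemma ev_sub (a b : Edge n → ℝ) (u v : Fin n) :
    ev (a - b) u v = ev a u v - ev b u v := by
  unfold ev
  rcases eq_or_ne u v with h | h
  · simp [h]
  · rw [dif_neg h, dif_neg h, dif_neg h]; rfl

lemma ev_nonneg {a : Edge n → ℝ} (ha : ∀ e, 0 ≤ a e) (u v : Fin n) : 0 ≤ ev a u v := by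
  unfold ev
  rcases eq_or_ne u v with h | h
  · simp [h]
  · rw [dif_neg h]; exact ha _

lemma ev_indic {p q u v : Fin n} (h : u ≠ v) :
    ev (indic p q) u v = if s(u, v) = s(p, q) then 1 else 0 := by
  rw [ev_of_ne _ h]; rfl

/-- natural-valued version of `ev` -/
def evn (m : Edge n → ℕ) (u v : Fin n) : ℕ :=
  if h : u = v then 0 else m (mkE h)

lemma evn_symm (m : Edge n → ℕ) (u v : Fin n) : evn m u v = evn m v u := by
  unfold evn
  rcases eq_or_ne u v with h | h
  · subst h; simp
  · rw [dif_neg h, dif_neg (Ne.symm h), mkE_symm]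

lemma ev_cast (m : Edge n → ℕ) (u v : Fin n) :
    ev (fun e => (m e : ℝ)) u v = (evn m u v : ℝ) := by
  unfold ev evn
  rcases eq_or_ne u v with h | h
  · simp [h]
  · rw [dif_neg h, dif_neg h]; rfl

lemma evn_self (m : Edge n → ℕ) (u : Fin n) : evn m u u = 0 := dif_pos rfl

lemma evn_of_ne (m : Edge n → ℕ) {u v : Fin n} (h : u ≠ v) : evn m u v = m (mkE h) :=
  dif_neg h

/-- natural-valued degree -/
def degn (m : Edge n → ℕ) (u : Fin n) : ℕ := ∑ v, evn m u v

lemma degree_eq_sum_ev (x : Edge n → ℝ) (u : Fin n) :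
    degree x u = ∑ v, ev x u v := by
  classical
  have h0 : ∑ v, ev x u v = ∑ v ∈ Finset.univ.erase u, ev x u v := by
    rw [Finset.sum_erase _ (ev_self x u)]
  rw [h0]
  unfold degree
  rw [← Finset.sum_filter]
  refine Finset.sum_bij' (i := fun e he => Sym2.Mem.other' (Finset.mem_filter.mp he).2)
    (j := fun v hv => mkE (fun h : u = v => (Finset.mem_erase.mp hv).1 h.symm)) ?_ ?_ ?_ ?_ ?_
  · intro e he
    have hue : u ∈ e.val := (Finset.mem_filter.mp he).2
    refine Finset.mem_erase.mpr ⟨?_, Finset.mem_univ _⟩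
    intro hcontra
    have hcontra' : Sym2.Mem.other' hue = u := hcontra
    apply e.prop
    have := Sym2.other_spec' hue
    rw [hcontra'] at this
    rw [← this]
    exact Sym2.mk_isDiag_iff.mpr rfl
  · intro v hv
    exact Finset.mem_filter.mpr ⟨Finset.mem_univ _, Sym2.mem_mk_left _ _⟩
  · intro e he
    apply Subtype.ext
    exact Sym2.other_spec' (Finset.mem_filter.mp he).2
  · intro v hv
    have h := Sym2.other_spec' (Sym2.mem_mk_left u v)
    exact (Sym2.congr_right.mp h)
  · intro e he
    have hue : u ∈ e.val := (Finset.mem_filter.mp he).2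
    have hne : u ≠ Sym2.Mem.other' hue := by
      intro heq
      apply e.prop
      have := Sym2.other_spec' hue
      rw [← heq] at this
      rw [← this]
      exact Sym2.mk_isDiag_iff.mpr rfl
    have : ev x u (Sym2.Mem.other' hue) = x e := by
      rw [ev_of_ne x hne]
      congr 1
      apply Subtype.ext
      exact Sym2.other_spec' hue
    exact this.symm

lemma degree_cast (m : Edge n → ℕ) (u : Fin n) :
    degree (fun e => (m e : ℝ)) u = (degn m u : ℝ) := by
  rw [degree_eq_sum_ev]
  unfold degn
  push_cast
  exact Finset.sum_congr rfl fun v _ => ev_cast m u v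

lemma dot_add_right (a x y : Edge n → ℝ) : dot a (x + y) = dot a x + dot a y := by
  unfold dot
  rw [← Finset.sum_add_distrib]
  exact Finset.sum_congr rfl fun e _ => by simp [Pi.add_apply, mul_add]

lemma dot_sub_right (a x y : Edge n → ℝ) : dot a (x - y) = dot a x - dot a y := by
  unfold dot
  rw [← Finset.sum_sub_distrib]
  exact Finset.sum_congr rfl fun e _ => by simp [Pi.sub_apply, mul_sub]

lemma dot_smul_right (a : Edge n → ℝ) (c : ℝ) (x : Edge n → ℝ) :
    dot a (c • x) = c * dot a x := by
  unfold dot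
  rw [Finset.mul_sum]
  exact Finset.sum_congr rfl fun e _ => by simp [Pi.smul_apply]; ring

lemma dot_sum_right {ι : Type*} (a : Edge n → ℝ) (t : Finset ι) (f : ι → Edge n → ℝ) :
    dot a (∑ i ∈ t, f i) = ∑ i ∈ t, dot a (f i) := by
  unfold dot
  rw [Finset.sum_comm]
  refine Finset.sum_congr rfl fun e _ => ?_
  rw [Finset.sum_apply, Finset.mul_sum]

lemma dot_indic (a : Edge n → ℝ) {u v : Fin n} (h : u ≠ v) :
    dot a (indic u v) = a (mkE h) := by
  unfold dot indic
  have : ∀ e : Edge n, (e.val = s(u, v)) = (e = mkE h) := by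
    intro e; rw [Subtype.ext_iff]; rfl
  simp only [this]
  rw [Finset.sum_congr rfl (fun e _ => by rw [mul_ite, mul_one, mul_zero])]
  rw [Finset.sum_ite_eq' Finset.univ (mkE h) a]
  simp

lemma sum_indic {u v : Fin n} (h : u ≠ v) : ∑ e, indic u v e = (1 : ℝ) := by
  unfold indic
  have : ∀ e : Edge n, (e.val = s(u, v)) = (e = mkE h) := by
    intro e; rw [Subtype.ext_iff]; rfl
  simp only [this]
  rw [Finset.sum_ite_eq' Finset.univ (mkE h) (fun _ => (1:ℝ))]
  simp

lemma dot_shortcut (a : Edge n → ℝ) {u v w : Fin n} (h : RootedTri u v w) :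
    dot a (shortcut u v w) = ev a v w - ev a v u - ev a u w := by
  obtain ⟨hvw, huv, huw⟩ := h
  have e1 : dot a (indic v w) = ev a v w := by rw [dot_indic a hvw, ev_of_ne a hvw]
  have e2 : dot a (indic v u) = ev a v u := by
    rw [dot_indic a (Ne.symm huv), ev_of_ne a (Ne.symm huv)]
  have e3 : dot a (indic u w) = ev a u w := by rw [dot_indic a huw, ev_of_ne a huw]
  have : shortcut u v w = indic v w - indic v u - indic u w := rfl
  rw [this, dot_sub_right, dot_sub_right, e1, e2, e3]

lemma sum_shortcut {u v w : Fin n} (h : RootedTri u v w) :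
    ∑ e, shortcut u v w e = (-1 : ℝ) := by
  obtain ⟨hvw, huv, huw⟩ := h
  unfold shortcut
  rw [Finset.sum_sub_distrib, Finset.sum_sub_distrib, sum_indic hvw,
    sum_indic (Ne.symm huv), sum_indic huw]
  norm_num

end Aux11

section Aux11b
open Finset

variable {n : ℕ}

lemma support_adj (x : Edge n → ℝ) (v w : Fin n) :
    (supportGraph x).Adj v w ↔ v ≠ w ∧ 0 < ev x v w := Iff.rfl

/-- the graph `G` with vertex `u` isolated -/
def avoid (G : SimpleGraph (Fin n)) (u : Fin n) : SimpleGraph (Fin n) where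
  Adj a b := G.Adj a b ∧ a ≠ u ∧ b ≠ u
  symm := ⟨fun a b h => ⟨h.1.symm, h.2.2, h.2.1⟩⟩
  loopless := ⟨fun a h => G.irrefl h.1⟩

lemma reachable_of_adj_imp {G H : SimpleGraph (Fin n)}
    (himp : ∀ v w, G.Adj v w → H.Reachable v w) {v w : Fin n} :
    G.Reachable v w → H.Reachable v w := by
  intro h
  obtain ⟨p⟩ := h
  induction p with
  | nil => exact SimpleGraph.Reachable.refl _
  | cons h p ih => exact (himp _ _ h).trans ih

lemma connected_of_adj_imp {G H : SimpleGraph (Fin n)}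
    (himp : ∀ v w, G.Adj v w → H.Reachable v w) (hG : G.Connected) : H.Connected := by
  rw [SimpleGraph.connected_iff] at hG ⊢
  exact ⟨fun v w => reachable_of_adj_imp himp (hG.1 v w), hG.2⟩

lemma closed_walk {G : SimpleGraph (Fin n)} {S : Set (Fin n)}
    (hS : ∀ v ∈ S, ∀ w, G.Adj v w → w ∈ S) {a b : Fin n} (w : G.Walk a b) :
    a ∈ S → b ∈ S := by
  induction w with
  | nil => exact id
  | cons h p ih => exact fun ha => ih (hS _ ha _ h)

lemma exists_exit {G : SimpleGraph (Fin n)} {u v : Fin n} (w : G.Walk v u) :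
    v ≠ u → ∃ t, G.Adj u t ∧ (avoid G u).Reachable v t := by
  induction w with
  | nil => exact fun h => absurd rfl h
  | @cons a c b h p ih =>
    intro hvu
    by_cases hc : c = b
    · subst hc
      exact ⟨a, (h.symm : G.Adj c a), SimpleGraph.Reachable.refl _⟩
    · obtain ⟨t, hadj, hreach⟩ := ih hc
      have hadj' : (avoid G b).Adj a c := ⟨h, hvu, hc⟩
      exact ⟨t, hadj, hadj'.reachable.trans hreach⟩

lemma even_sym_sum (f : Fin n → Fin n → ℕ) (hsymm : ∀ v w, f v w = f w v)
    (hdiag : ∀ v, f v v = 0) (C : Finset (Fin n)) :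
    Even (∑ v ∈ C, ∑ w ∈ C, f v w) := by
  classical
  induction C using Finset.induction_on with
  | empty => simp
  | @insert a C ha ih =>
    rw [Finset.sum_insert ha, Finset.sum_insert ha, hdiag]
    have h2 : ∑ v ∈ C, ∑ w ∈ insert a C, f v w
        = ∑ v ∈ C, f v a + ∑ v ∈ C, ∑ w ∈ C, f v w := by
      rw [← Finset.sum_add_distrib]
      exact Finset.sum_congr rfl fun v _ => by rw [Finset.sum_insert ha]
    rw [h2]
    have h3 : ∑ v ∈ C, f v a = ∑ w ∈ C, f a w :=
      Finset.sum_congr rfl fun v _ => hsymm v a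
    rw [h3]
    obtain ⟨k, hk⟩ := ih
    exact ⟨∑ w ∈ C, f a w + k, by omega⟩

lemma even_attach (m : Edge n → ℕ) (hEven : ∀ v, Even (degn m v)) (u : Fin n)
    (C : Finset (Fin n)) (hu : u ∉ C)
    (hclosed : ∀ v ∈ C, ∀ w, w ∉ C → w ≠ u → evn m v w = 0) :
    Even (∑ v ∈ C, evn m v u) := by
  classical
  have hsplit : ∀ v ∈ C, degn m v = (∑ w ∈ C, evn m v w) + evn m v u := by
    intro v hv
    unfold degn
    rw [← Finset.sum_filter_add_sum_filter_not Finset.univ (· ∈ C)]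
    congr 1
    · apply Finset.sum_congr _ (fun _ _ => rfl)
      ext w; simp
    · rw [Finset.sum_eq_single_of_mem u (by simp [hu])]
      intro w hw hwne
      simp only [Finset.mem_filter] at hw
      exact hclosed v hv w hw.2 hwne
  have hA : Even (∑ v ∈ C, degn m v) := by
    rw [even_iff_two_dvd]
    exact Finset.dvd_sum fun v _ => (hEven v).two_dvd
  rw [Finset.sum_congr rfl hsplit, Finset.sum_add_distrib] at hA
  have hB : Even (∑ v ∈ C, ∑ w ∈ C, evn m v w) :=
    even_sym_sum _ (evn_symm m) (evn_self m) C
  obtain ⟨k1, hk1⟩ := hA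
  obtain ⟨k2, hk2⟩ := hB
  exact ⟨k1 - k2, by omega⟩

lemma eulerian_choose {x : Edge n → ℝ} (hx : IsEulerian x) :
    ∃ m : Edge n → ℕ, x = fun e => (m e : ℝ) :=
  ⟨fun e => (hx.1 e).choose, funext fun e => (hx.1 e).choose_spec⟩

lemma eulerian_degn {m : Edge n → ℕ} (hx : IsEulerian (fun e => (m e : ℝ))) (u : Fin n) :
    ∃ k : ℕ, 0 < k ∧ degn m u = 2 * k := by
  obtain ⟨k, hk, hdeg⟩ := hx.2.2 u
  refine ⟨k, hk, ?_⟩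
  rw [degree_cast] at hdeg
  exact_mod_cast hdeg

lemma support_adj_nat (m : Edge n → ℕ) (v w : Fin n) :
    (supportGraph (fun e => (m e : ℝ))).Adj v w ↔ v ≠ w ∧ 1 ≤ evn m v w := by
  rw [support_adj, ev_cast]
  constructor
  · rintro ⟨h1, h2⟩; exact ⟨h1, by exact_mod_cast h2⟩
  · rintro ⟨h1, h2⟩; exact ⟨h1, by exact_mod_cast h2⟩

lemma indic_apply {u v : Fin n} (h : u ≠ v) (e : Edge n) :
    indic u v e = if e = mkE h then 1 else 0 := by
  unfold indic
  by_cases he : e = mkE h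
  · subst he
    rw [if_pos rfl]
    exact if_pos rfl
  · rw [if_neg he]
    exact if_neg (fun hval => he (Subtype.ext hval))

lemma shortcut_apply {u p q : Fin n} (h : RootedTri u p q) (e : Edge n) :
    shortcut u p q e = (if e = mkE h.1 then 1 else 0)
      - (if e = mkE (Ne.symm h.2.1) then 1 else 0) - (if e = mkE h.2.2 then 1 else 0) := by
  show indic p q e - indic p u e - indic u q e = _
  rw [indic_apply h.1, indic_apply (Ne.symm h.2.1), indic_apply h.2.2]

lemma tri_edges_ne {u p q : Fin n} (h : RootedTri u p q) :
    mkE h.1 ≠ mkE (Ne.symm h.2.1) ∧ mkE h.1 ≠ mkE h.2.2 ∧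
      mkE (Ne.symm h.2.1) ≠ mkE h.2.2 := by
  obtain ⟨hpq, hup, huq⟩ := h
  refine ⟨?_, ?_, ?_⟩ <;>
    · intro he
      have := Subtype.ext_iff.mp he
      rw [mkE_val, mkE_val, Sym2.eq_iff] at this
      rcases this with ⟨h1, h2⟩ | ⟨h1, h2⟩ <;> subst_vars <;> tauto

lemma shortcut_nonpos_of_ne {u p q : Fin n} (h : RootedTri u p q) {e : Edge n}
    (he : e ≠ mkE h.1) : shortcut u p q e ≤ 0 := by
  rw [shortcut_apply h, if_neg he]
  split_ifs <;> norm_num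

lemma shortcut_nonneg_of_ne {u p q : Fin n} (h : RootedTri u p q) {e : Edge n}
    (he1 : e ≠ mkE (Ne.symm h.2.1)) (he2 : e ≠ mkE h.2.2) : 0 ≤ shortcut u p q e := by
  rw [shortcut_apply h, if_neg he1, if_neg he2]
  split_ifs <;> norm_num

lemma degree_add (x y : Edge n → ℝ) (u : Fin n) :
    degree (x + y) u = degree x u + degree y u := by
  rw [degree_eq_sum_ev, degree_eq_sum_ev, degree_eq_sum_ev, ← Finset.sum_add_distrib]
  exact Finset.sum_congr rfl fun v _ => ev_add x y u v

lemma degree_sub (x y : Edge n → ℝ) (u : Fin n) :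
    degree (x - y) u = degree x u - degree y u := by
  rw [degree_eq_sum_ev, degree_eq_sum_ev, degree_eq_sum_ev, ← Finset.sum_sub_distrib]
  exact Finset.sum_congr rfl fun v _ => ev_sub x y u v

lemma degree_indic {p q : Fin n} (h : p ≠ q) (v : Fin n) :
    degree (indic p q) v = if v = p ∨ v = q then 1 else 0 := by
  unfold degree
  rw [Finset.sum_eq_single_of_mem (mkE h) (Finset.mem_univ _)]
  · rw [indic_apply h, if_pos rfl]
    by_cases hv : v ∈ (mkE h).val
    · rw [if_pos hv, if_pos (Sym2.mem_iff.mp hv)]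
    · rw [if_neg hv, if_neg (fun hor => hv (Sym2.mem_iff.mpr hor))]
  · intro e _ hne
    rw [indic_apply h, if_neg hne]
    exact ite_self 0

lemma degree_shortcut {u p q : Fin n} (h : RootedTri u p q) (v : Fin n) :
    degree (shortcut u p q) v = if v = u then -2 else 0 := by
  obtain ⟨hpq, hup, huq⟩ := h
  have : shortcut u p q = indic p q - indic p u - indic u q := rfl
  rw [this, degree_sub, degree_sub, degree_indic hpq, degree_indic (Ne.symm hup),
    degree_indic huq]
  by_cases hv : v = u
  · subst hv
    rw [if_pos rfl, if_neg (by tauto), if_pos (Or.inr rfl), if_pos (Or.inl rfl)]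
    norm_num
  · rw [if_neg hv]
    by_cases hvp : v = p
    · subst hvp
      rw [if_pos (Or.inl rfl), if_pos (Or.inl rfl), if_neg (by tauto)]
      norm_num
    · by_cases hvq : v = q
      · subst hvq
        rw [if_pos (Or.inr rfl), if_neg (by tauto), if_pos (Or.inr rfl)]
        norm_num
      · rw [if_neg (by tauto), if_neg (by tauto), if_neg (by tauto)]
        norm_num

end Aux11b

section Aux11c
open Finset

variable {n : ℕ}

lemma shortcut_at_pq {u p q : Fin n} (h : RootedTri u p q) :
    shortcut u p q (mkE h.1) = 1 := by
  obtain ⟨hne1, hne2, _⟩ := tri_edges_ne h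
  rw [shortcut_apply h, if_pos rfl, if_neg hne1, if_neg hne2]
  norm_num

lemma shortcut_at_pu {u p q : Fin n} (h : RootedTri u p q) :
    shortcut u p q (mkE (Ne.symm h.2.1)) = -1 := by
  obtain ⟨hne1, _, hne3⟩ := tri_edges_ne h
  rw [shortcut_apply h, if_neg (Ne.symm hne1), if_pos rfl, if_neg hne3]
  norm_num

lemma shortcut_at_uq {u p q : Fin n} (h : RootedTri u p q) :
    shortcut u p q (mkE h.2.2) = -1 := by
  obtain ⟨_, hne2, hne3⟩ := tri_edges_ne h
  rw [shortcut_apply h, if_neg (Ne.symm hne2), if_neg (Ne.symm hne3), if_pos rfl]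
  norm_num

lemma shortcut_at_other {u p q : Fin n} (h : RootedTri u p q) {e : Edge n}
    (h1 : e ≠ mkE h.1) (h2 : e ≠ mkE (Ne.symm h.2.1)) (h3 : e ≠ mkE h.2.2) :
    shortcut u p q e = 0 := by
  rw [shortcut_apply h, if_neg h1, if_neg h2, if_neg h3]
  norm_num

lemma eulerian_sub_shortcut_int {m : Edge n → ℕ} {u p q : Fin n} (h : RootedTri u p q)
    (hpq : 1 ≤ m (mkE h.1)) :
    ∀ e, ∃ k : ℕ, ((fun e => (m e : ℝ)) - shortcut u p q) e = k := by
  intro e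
  obtain ⟨hne1, hne2, hne3⟩ := tri_edges_ne h
  by_cases h1 : e = mkE h.1
  · refine ⟨m e - 1, ?_⟩
    have hs : shortcut u p q e = 1 := by rw [h1]; exact shortcut_at_pq h
    have h1' : 1 ≤ m e := by rw [h1]; exact hpq
    simp only [Pi.sub_apply, hs]
    rw [Nat.cast_sub h1']
    norm_num
  · by_cases h2 : e = mkE (Ne.symm h.2.1)
    · refine ⟨m e + 1, ?_⟩
      have hs : shortcut u p q e = -1 := by rw [h2]; exact shortcut_at_pu h
      simp only [Pi.sub_apply, hs]
      push_cast; ring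
    · by_cases h3 : e = mkE h.2.2
      · refine ⟨m e + 1, ?_⟩
        have hs : shortcut u p q e = -1 := by rw [h3]; exact shortcut_at_uq h
        simp only [Pi.sub_apply, hs]
        push_cast; ring
      · refine ⟨m e, ?_⟩
        have hs : shortcut u p q e = 0 := shortcut_at_other h h1 h2 h3
        simp only [Pi.sub_apply, hs]
        norm_num

lemma eulerian_add_shortcut_int {m : Edge n → ℕ} {u p q : Fin n} (h : RootedTri u p q)
    (hpu : 1 ≤ m (mkE (Ne.symm h.2.1))) (huq : 1 ≤ m (mkE h.2.2)) :
    ∀ e, ∃ k : ℕ, ((fun e => (m e : ℝ)) + shortcut u p q) e = k := by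
  intro e
  obtain ⟨hne1, hne2, hne3⟩ := tri_edges_ne h
  by_cases h1 : e = mkE h.1
  · refine ⟨m e + 1, ?_⟩
    have hs : shortcut u p q e = 1 := by rw [h1]; exact shortcut_at_pq h
    simp only [Pi.add_apply, hs]
    push_cast; ring
  · by_cases h2 : e = mkE (Ne.symm h.2.1)
    · refine ⟨m e - 1, ?_⟩
      have hs : shortcut u p q e = -1 := by rw [h2]; exact shortcut_at_pu h
      have h1' : 1 ≤ m e := by rw [h2]; exact hpu
      simp only [Pi.add_apply, hs]
      rw [Nat.cast_sub h1']
      ring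
    · by_cases h3 : e = mkE h.2.2
      · refine ⟨m e - 1, ?_⟩
        have hs : shortcut u p q e = -1 := by rw [h3]; exact shortcut_at_uq h
        have h1' : 1 ≤ m e := by rw [h3]; exact huq
        simp only [Pi.add_apply, hs]
        rw [Nat.cast_sub h1']
        ring
      · refine ⟨m e, ?_⟩
        have hs : shortcut u p q e = 0 := shortcut_at_other h h1 h2 h3
        simp only [Pi.add_apply, hs]
        norm_num

lemma eulerian_detour {m : Edge n → ℕ} (hx : IsEulerian (fun e => (m e : ℝ)))
    {u p q : Fin n} (h : RootedTri u p q) (hpq : 1 ≤ m (mkE h.1)) :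
    IsEulerian ((fun e => (m e : ℝ)) - shortcut u p q) := by
  set x : Edge n → ℝ := fun e => (m e : ℝ) with hxdef
  have ha : ∀ e, 0 ≤ x e := fun e => Nat.cast_nonneg _
  refine ⟨eulerian_sub_shortcut_int h hpq, ?_, ?_⟩
  · -- connectivity
    have hadjPU : (supportGraph (x - shortcut u p q)).Adj p u := by
      refine ⟨Ne.symm h.2.1, ?_⟩
      have : ev (x - shortcut u p q) p u
          = ev x p u - ev (shortcut u p q) p u := ev_sub _ _ _ _
      rw [this, ev_of_ne (shortcut u p q) (Ne.symm h.2.1), shortcut_at_pu h]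
      have := ev_nonneg ha p u
      linarith
    have hadjUQ : (supportGraph (x - shortcut u p q)).Adj u q := by
      refine ⟨h.2.2, ?_⟩
      have : ev (x - shortcut u p q) u q
          = ev x u q - ev (shortcut u p q) u q := ev_sub _ _ _ _
      rw [this, ev_of_ne (shortcut u p q) h.2.2, shortcut_at_uq h]
      have := ev_nonneg ha u q
      linarith
    refine connected_of_adj_imp ?_ hx.2.1
    intro v w hadj
    obtain ⟨hvw, hpos⟩ := hadj
    by_cases hepq : mkE hvw = mkE h.1
    · have hval := Subtype.ext_iff.mp hepq
      rw [mkE_val, mkE_val, Sym2.eq_iff] at hval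
      rcases hval with ⟨h1, h2⟩ | ⟨h1, h2⟩
      · subst h1; subst h2
        exact hadjPU.reachable.trans hadjUQ.reachable
      · subst h1; subst h2
        exact hadjUQ.symm.reachable.trans hadjPU.symm.reachable
    · refine SimpleGraph.Adj.reachable ⟨hvw, ?_⟩
      have hev : ev (x - shortcut u p q) v w
          = ev x v w - shortcut u p q (mkE hvw) := by
        rw [ev_sub, ev_of_ne (shortcut u p q) hvw]
      rw [hev]
      have := shortcut_nonpos_of_ne h hepq
      linarith
  · -- degrees
    intro v
    obtain ⟨k, hk, hdeg⟩ := hx.2.2 v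
    have hds : degree (x - shortcut u p q) v
        = degree x v - degree (shortcut u p q) v := degree_sub _ _ _
    rw [degree_shortcut h] at hds
    by_cases hv : v = u
    · refine ⟨k + 1, by omega, ?_⟩
      rw [hds, if_pos hv, hdeg]
      push_cast; ring
    · refine ⟨k, hk, ?_⟩
      rw [hds, if_neg hv, hdeg]
      ring

lemma eulerian_add_shortcut {m : Edge n → ℕ} (hx : IsEulerian (fun e => (m e : ℝ)))
    {u p q : Fin n} (h : RootedTri u p q)
    (hpu : 1 ≤ m (mkE (Ne.symm h.2.1))) (huq : 1 ≤ m (mkE h.2.2))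
    (hdeg4 : 4 ≤ degn m u)
    (hconn : (supportGraph ((fun e => (m e : ℝ)) + shortcut u p q)).Connected) :
    IsEulerian ((fun e => (m e : ℝ)) + shortcut u p q) := by
  set x : Edge n → ℝ := fun e => (m e : ℝ) with hxdef
  refine ⟨eulerian_add_shortcut_int h hpu huq, hconn, ?_⟩
  intro v
  obtain ⟨k, hk, hdeg⟩ := hx.2.2 v
  have hds : degree (x + shortcut u p q) v
      = degree x v + degree (shortcut u p q) v := degree_add _ _ _
  rw [degree_shortcut h] at hds
  by_cases hv : v = u
  · have hk2 : 2 ≤ k := by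
      have h4 : (4 : ℝ) ≤ degree x u := by
        rw [degree_cast]
        exact_mod_cast hdeg4
      rw [hv] at hdeg
      rw [hdeg] at h4
      have : (2 : ℝ) ≤ (k : ℝ) := by linarith
      exact_mod_cast this
    refine ⟨k - 1, by omega, ?_⟩
    rw [hds, if_pos hv, hdeg]
    have : ((k - 1 : ℕ) : ℝ) = (k : ℝ) - 1 := by
      rw [Nat.cast_sub (by omega)]
      norm_num
    rw [this]
    ring
  · refine ⟨k, hk, ?_⟩
    rw [hds, if_neg hv, hdeg]
    ring

end Aux11c

section Aux11d
open Finset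

variable {n : ℕ}

lemma evn_ne_of_pos {m : Edge n → ℕ} {u v : Fin n} (h : 1 ≤ evn m u v) : u ≠ v := by
  intro he; subst he; rw [evn_self] at h; omega

lemma exists_split_root (hn : 3 ≤ n) {m : Edge n → ℕ}
    (hx : IsEulerian (fun e => (m e : ℝ))) {u0 : Fin n} (hdeg4 : 4 ≤ degn m u0) :
    ∃ u p q : Fin n, 4 ≤ degn m u ∧ p ≠ q ∧ 1 ≤ evn m u p ∧ 1 ≤ evn m u q := by
  classical
  have hN0 : ∃ y, 1 ≤ evn m u0 y := by
    by_contra hno; push_neg at hno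
    have hz : degn m u0 = 0 := Finset.sum_eq_zero fun v _ => by have := hno v; omega
    omega
  obtain ⟨y, hy⟩ := hN0
  by_cases htwo : ∃ z, z ≠ y ∧ 1 ≤ evn m u0 z
  · obtain ⟨z, hzy, hz⟩ := htwo
    exact ⟨u0, y, z, hdeg4, Ne.symm hzy, hy, hz⟩
  · push_neg at htwo
    have htwo' : ∀ z, z ≠ y → evn m u0 z = 0 := fun z hz => by have := htwo z hz; omega
    have hdeg_eq : degn m u0 = evn m u0 y := by
      unfold degn
      rw [Finset.sum_eq_single_of_mem y (Finset.mem_univ _)]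
      intro v _ hvy; exact htwo' v hvy
    have hyu4 : 4 ≤ evn m u0 y := hdeg_eq ▸ hdeg4
    have hdegy : 4 ≤ degn m y := by
      have h1 : evn m y u0 ≤ degn m y :=
        Finset.single_le_sum (f := fun v => evn m y v) (fun v _ => Nat.zero_le _)
          (Finset.mem_univ u0)
      rw [evn_symm m y u0] at h1
      omega
    have hz : ∃ z, z ≠ u0 ∧ 1 ≤ evn m y z := by
      by_contra hno; push_neg at hno
      have hno' : ∀ z, z ≠ u0 → evn m y z = 0 := fun z hz => by have := hno z hz; omega
      -- {u0, y} is closed under adjacency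
      have hclosed : ∀ v ∈ ({u0, y} : Set (Fin n)), ∀ w,
          (supportGraph (fun e => (m e : ℝ))).Adj v w → w ∈ ({u0, y} : Set (Fin n)) := by
        intro v hv w hadj
        obtain ⟨hne, hpos⟩ := (support_adj_nat m v w).mp hadj
        rcases hv with hv | hv
        · subst hv
          by_cases hwy : w = y
          · exact Or.inr hwy
          · rw [htwo' w hwy] at hpos; omega
        · simp only [Set.mem_singleton_iff] at hv
          subst hv
          by_cases hwu : w = u0
          · exact Or.inl hwu
          · rw [hno' w hwu] at hpos; omega
      have hcard : ¬ (∀ t : Fin n, t = u0 ∨ t = y) := by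
        intro hall
        have hsub : (Finset.univ : Finset (Fin n)) ⊆ {u0, y} := by
          intro t _
          rcases hall t with h | h <;> simp [h]
        have h1 := Finset.card_le_card hsub
        have h2 : ({u0, y} : Finset (Fin n)).card ≤ 2 := by
          apply le_trans (Finset.card_insert_le _ _)
          simp
        rw [Finset.card_univ, Fintype.card_fin] at h1
        omega
      push_neg at hcard
      obtain ⟨t, ht1, ht2⟩ := hcard
      obtain ⟨wk⟩ := (hx.2.1).preconnected u0 t
      have := closed_walk hclosed wk (Or.inl rfl)
      rcases this with h | h
      · exact ht1 h
      · exact ht2 h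
    obtain ⟨z, hzu, hz1⟩ := hz
    refine ⟨y, u0, z, hdegy, Ne.symm hzu, ?_, hz1⟩
    rw [evn_symm]; omega

lemma split_lemma (hn : 3 ≤ n) {m : Edge n → ℕ}
    (hx : IsEulerian (fun e => (m e : ℝ))) {u0 : Fin n} (hdeg4 : 4 ≤ degn m u0) :
    ∃ u p q, RootedTri u p q ∧ IsEulerian ((fun e => (m e : ℝ)) + shortcut u p q) := by
  classical
  obtain ⟨u, p0, q0, hdegu, hp0q0, hup0, huq0⟩ := exists_split_root hn hx hdeg4
  set x : Edge n → ℝ := fun e => (m e : ℝ) with hxdef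
  set G : SimpleGraph (Fin n) := supportGraph x with hGdef
  have hGadj : ∀ v w, G.Adj v w ↔ v ≠ w ∧ 1 ≤ evn m v w := fun v w => support_adj_nat m v w
  -- choose p q
  have hchoice : ∃ p q : Fin n, p ≠ q ∧ 1 ≤ evn m u p ∧ 1 ≤ evn m u q ∧
      (¬ (avoid G u).Reachable p q ∨
        ∀ t, 1 ≤ evn m u t → (avoid G u).Reachable t p) := by
    by_cases hsep : ∃ p q : Fin n, p ≠ q ∧ 1 ≤ evn m u p ∧ 1 ≤ evn m u q ∧
        ¬ (avoid G u).Reachable p q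
    · obtain ⟨p, q, h1, h2, h3, h4⟩ := hsep
      exact ⟨p, q, h1, h2, h3, Or.inl h4⟩
    · push_neg at hsep
      refine ⟨p0, q0, hp0q0, hup0, huq0, Or.inr ?_⟩
      intro t ht
      by_cases htp : t = p0
      · exact htp ▸ SimpleGraph.Reachable.refl _
      · exact hsep t p0 htp ht hup0
  obtain ⟨p, q, hpq, hevup, hevuq, hgood0⟩ := hchoice
  have hup : u ≠ p := evn_ne_of_pos hevup
  have huq : u ≠ q := evn_ne_of_pos hevuq
  have htri : RootedTri u p q := ⟨hpq, hup, huq⟩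
  set x' : Edge n → ℝ := x + shortcut u p q with hx'def
  set G' : SimpleGraph (Fin n) := supportGraph x' with hG'def
  have hxnn : ∀ e, 0 ≤ x e := fun e => Nat.cast_nonneg _
  -- persistence of edges avoiding u
  have hpers : ∀ v w, (avoid G u).Adj v w → G'.Adj v w := by
    rintro v w ⟨⟨hvw, hpos⟩, hvu, hwu⟩
    refine ⟨hvw, ?_⟩
    have hev' : ev x' v w = ev x v w + shortcut u p q (mkE hvw) := by
      rw [hx'def, ev_add, ev_of_ne (shortcut u p q) hvw]
    have hnn : 0 ≤ shortcut u p q (mkE hvw) := by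
      refine shortcut_nonneg_of_ne htri ?_ ?_
      · intro he
        have hval := Subtype.ext_iff.mp he
        rw [mkE_val, mkE_val, Sym2.eq_iff] at hval
        rcases hval with ⟨h1, h2⟩ | ⟨h1, h2⟩
        · exact hwu h2
        · exact hvu h1
      · intro he
        have hval := Subtype.ext_iff.mp he
        rw [mkE_val, mkE_val, Sym2.eq_iff] at hval
        rcases hval with ⟨h1, h2⟩ | ⟨h1, h2⟩
        · exact hvu h1
        · exact hwu h2
    rw [hev']
    linarith
  have hreachpers : ∀ {v w : Fin n}, (avoid G u).Reachable v w → G'.Reachable v w :=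
    fun h => reachable_of_adj_imp (fun a b hab => (hpers a b hab).reachable) h
  -- the new edge pq
  have hadjpq' : G'.Adj p q := by
    refine ⟨hpq, ?_⟩
    have : mkE hpq = mkE htri.1 := Subtype.ext rfl
    have hev' : ev x' p q = ev x p q + shortcut u p q (mkE hpq) := by
      rw [hx'def, ev_add, ev_of_ne (shortcut u p q) hpq]
    rw [hev', this, shortcut_at_pq htri]
    have := ev_nonneg hxnn p q
    linarith
  -- the class of p
  set C : Finset (Fin n) :=
    Finset.univ.filter (fun v => v ≠ u ∧ (avoid G u).Reachable v p) with hCdef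
  have hpC : p ∈ C := by
    rw [hCdef]
    exact Finset.mem_filter.mpr ⟨Finset.mem_univ _, Ne.symm hup, SimpleGraph.Reachable.refl _⟩
  have huC : u ∉ C := by
    rw [hCdef]
    simp
  have hclosedC : ∀ v ∈ C, ∀ w, w ∉ C → w ≠ u → evn m v w = 0 := by
    intro v hv w hw hwu
    by_contra hne0
    have h1 : 1 ≤ evn m v w := by omega
    have hvw : v ≠ w := evn_ne_of_pos h1
    have hvC := (Finset.mem_filter.mp hv).2
    have hadj : (avoid G u).Adj w v := by
      refine ⟨(hGadj w v).mpr ⟨Ne.symm hvw, by rw [evn_symm]; omega⟩, hwu, hvC.1⟩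
    exact hw (Finset.mem_filter.mpr ⟨Finset.mem_univ _,
      hwu, hadj.reachable.trans hvC.2⟩)
  have hevenC : Even (∑ v ∈ C, evn m v u) := by
    refine even_attach m (fun v => ?_) u C huC hclosedC
    obtain ⟨k, _, hk⟩ := eulerian_degn hx v
    exact ⟨k, by omega⟩
  have hT1 : 1 ≤ ∑ v ∈ C, evn m v u := by
    have h1 : evn m p u ≤ ∑ v ∈ C, evn m v u :=
      Finset.single_le_sum (f := fun v => evn m v u) (fun v _ => Nat.zero_le _) hpC
    rw [evn_symm] at h1
    omega
  have hT2 : 2 ≤ ∑ v ∈ C, evn m v u := by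
    obtain ⟨r, hr⟩ := hevenC
    omega
  -- good bound
  have hgood : q ∉ C ∨ 4 ≤ ∑ v ∈ C, evn m v u := by
    rcases hgood0 with hnr | hall
    · left
      intro hqC
      exact hnr ((Finset.mem_filter.mp hqC).2.2).symm
    · right
      have hsum_eq : ∑ v ∈ C, evn m u v = ∑ v, evn m u v := by
        refine Finset.sum_subset (Finset.subset_univ C) ?_
        intro v _ hvC
        by_contra hne0
        have h1 : 1 ≤ evn m u v := by omega
        exact hvC (Finset.mem_filter.mpr ⟨Finset.mem_univ _,
          Ne.symm (evn_ne_of_pos h1), hall v h1⟩)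
      have hcongr : ∑ v ∈ C, evn m v u = ∑ v ∈ C, evn m u v :=
        Finset.sum_congr rfl fun v _ => evn_symm m v u
      rw [hcongr, hsum_eq]
      exact hdegu
  -- attachment of C to u in x'
  have hper : ∀ v ∈ C, ev x' v u = (evn m v u : ℝ)
      - (if v = p then 1 else 0) - (if v = q then 1 else 0) := by
    intro v hv
    have hvu : v ≠ u := (Finset.mem_filter.mp hv).2.1
    have hev' : ev x' v u = ev x v u + shortcut u p q (mkE hvu) := by
      rw [hx'def, ev_add, ev_of_ne (shortcut u p q) hvu]
    by_cases hvp : v = p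
    · subst hvp
      have hthis : mkE hvu = mkE (Ne.symm htri.2.1) := Subtype.ext rfl
      rw [hev', ev_cast, hthis, shortcut_at_pu htri, if_pos rfl, if_neg hpq]
      ring
    · by_cases hvq : v = q
      · subst hvq
        have hthis : mkE hvu = mkE htri.2.2 := Subtype.ext Sym2.eq_swap
        rw [hev', ev_cast, hthis, shortcut_at_uq htri, if_neg hvp, if_pos rfl]
        ring
      · have h0 : shortcut u p q (mkE hvu) = 0 := by
          refine shortcut_at_other htri ?_ ?_ ?_
          · intro he
            have hval := Subtype.ext_iff.mp he
            rw [mkE_val, mkE_val, Sym2.eq_iff] at hval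
            rcases hval with ⟨ha, hb⟩ | ⟨ha, hb⟩
            · exact hvp ha
            · exact hvq ha
          · intro he
            have hval := Subtype.ext_iff.mp he
            rw [mkE_val, mkE_val, Sym2.eq_iff] at hval
            rcases hval with ⟨ha, hb⟩ | ⟨ha, hb⟩
            · exact hvp ha
            · exact hvu ha
          · intro he
            have hval := Subtype.ext_iff.mp he
            rw [mkE_val, mkE_val, Sym2.eq_iff] at hval
            rcases hval with ⟨ha, hb⟩ | ⟨ha, hb⟩
            · exact hvu ha
            · exact hvq ha
        rw [hev', ev_cast, h0, if_neg hvp, if_neg hvq]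
        ring
  have hsum' : (0:ℝ) < ∑ v ∈ C, ev x' v u := by
    rw [Finset.sum_congr rfl hper, Finset.sum_sub_distrib, Finset.sum_sub_distrib]
    rw [Finset.sum_ite_eq' C p (fun _ => (1:ℝ)), Finset.sum_ite_eq' C q (fun _ => (1:ℝ))]
    rw [if_pos hpC]
    rcases hgood with hq | h4
    · rw [if_neg hq]
      have h2c : (2:ℝ) ≤ ∑ v ∈ C, ((evn m v u : ℕ) : ℝ) := by exact_mod_cast hT2
      linarith
    · have h4c : (4:ℝ) ≤ ∑ v ∈ C, ((evn m v u : ℕ) : ℝ) := by exact_mod_cast h4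
      split_ifs <;> linarith
  have hcex : ∃ c ∈ C, 0 < ev x' c u := by
    by_contra hnone
    push_neg at hnone
    have := Finset.sum_nonpos hnone
    linarith
  obtain ⟨c, hcC, hc⟩ := hcex
  have hcu : c ≠ u := (Finset.mem_filter.mp hcC).2.1
  have hRup : G'.Reachable u p := by
    have hadjcu : G'.Adj c u := ⟨hcu, hc⟩
    exact (hadjcu.symm.reachable).trans (hreachpers (Finset.mem_filter.mp hcC).2.2)
  have hNp : ∀ t, G.Adj u t → G'.Reachable t p := by
    intro t ht
    by_cases h1 : (avoid G u).Reachable t p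
    · exact hreachpers h1
    · by_cases h2 : (avoid G u).Reachable t q
      · exact (hreachpers h2).trans hadjpq'.symm.reachable
      · have htp : t ≠ p := fun h => h1 (h ▸ SimpleGraph.Reachable.refl _)
        have htq : t ≠ q := fun h => h2 (h ▸ SimpleGraph.Reachable.refl _)
        have hut : u ≠ t := ((hGadj u t).mp ht).1
        have hadjut : G'.Adj u t := by
          refine ⟨hut, ?_⟩
          have hev' : ev x' u t = ev x u t + shortcut u p q (mkE hut) := by
            rw [hx'def, ev_add, ev_of_ne (shortcut u p q) hut]
          have h0 : shortcut u p q (mkE hut) = 0 := by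
            refine shortcut_at_other htri ?_ ?_ ?_
            · intro he
              have hval := Subtype.ext_iff.mp he
              rw [mkE_val, mkE_val, Sym2.eq_iff] at hval
              rcases hval with ⟨ha, hb⟩ | ⟨ha, hb⟩
              · exact hup ha
              · exact huq ha
            · intro he
              have hval := Subtype.ext_iff.mp he
              rw [mkE_val, mkE_val, Sym2.eq_iff] at hval
              rcases hval with ⟨ha, hb⟩ | ⟨ha, hb⟩
              · exact hup ha
              · exact htp hb
            · intro he
              have hval := Subtype.ext_iff.mp he
              rw [mkE_val, mkE_val, Sym2.eq_iff] at hval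
              rcases hval with ⟨ha, hb⟩ | ⟨ha, hb⟩
              · exact htq hb
              · exact huq ha
          have hposn : 1 ≤ evn m u t := ((hGadj u t).mp ht).2
          have hpos : (1:ℝ) ≤ ev x u t := by
            rw [ev_cast]
            exact_mod_cast hposn
          rw [hev', h0]
          linarith
        exact hadjut.symm.reachable.trans hRup
  have hallp : ∀ v, G'.Reachable v p := by
    intro v
    by_cases hvu : v = u
    · exact hvu ▸ hRup
    · obtain ⟨wk⟩ := (hx.2.1).preconnected v u
      obtain ⟨t, hadj, hreach⟩ := exists_exit wk hvu
      exact (hreachpers hreach).trans (hNp t hadj)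
  have hconn' : G'.Connected := by
    rw [SimpleGraph.connected_iff]
    exact ⟨fun a b => (hallp a).trans (hallp b).symm, ⟨u⟩⟩
  have hmpu : 1 ≤ m (mkE (Ne.symm htri.2.1)) := by
    have hthis : mkE (Ne.symm htri.2.1) = mkE hup := Subtype.ext Sym2.eq_swap
    rw [hthis, ← evn_of_ne m hup]
    exact hevup
  have hmuq : 1 ≤ m (mkE htri.2.2) := by
    have hthis : mkE htri.2.2 = mkE huq := Subtype.ext rfl
    rw [hthis, ← evn_of_ne m huq]
    exact hevuq
  exact ⟨u, p, q, htri, eulerian_add_shortcut hx htri hmpu hmuq hdegu hconn'⟩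

end Aux11d

section Aux11e
open Finset

variable {n : ℕ}

lemma two_le_sum_nat {f : Fin n → ℕ} {i j : Fin n} (hij : i ≠ j) :
    f i + f j ≤ ∑ v, f v := by
  classical
  rw [← Finset.add_sum_erase _ f (Finset.mem_univ i)]
  have hj : j ∈ Finset.univ.erase i := Finset.mem_erase.mpr ⟨Ne.symm hij, Finset.mem_univ _⟩
  exact Nat.add_le_add_left (Finset.single_le_sum (fun v _ => Nat.zero_le _) hj) _

lemma ham_of_two_regular (hn : 3 ≤ n) {m : Edge n → ℕ}
    (hx : IsEulerian (fun e => (m e : ℝ))) (hdeg : ∀ v, degn m v = 2) :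
    ∃ σ : Equiv.Perm (Fin n), (fun e => (m e : ℝ)) = hamVec σ := by
  classical
  -- step 1 : simple graph (all multiplicities ≤ 1)
  have hle1 : ∀ v w, evn m v w ≤ 1 := by
    intro v w
    by_contra hge
    push_neg at hge
    have hpos1 : 1 ≤ evn m v w := by omega
    have hvw : v ≠ w := evn_ne_of_pos hpos1
    have hvz : ∀ t, t ≠ w → evn m v t = 0 := by
      intro t ht
      by_cases htw : t = v
      · subst htw; exact evn_self m t
      · have h2 : evn m v w + evn m v t ≤ ∑ z, evn m v z :=
          two_le_sum_nat (f := fun z => evn m v z) (show w ≠ t from Ne.symm ht)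
        have hd := hdeg v
        unfold degn at hd
        omega
    have hwz : ∀ t, t ≠ v → evn m w t = 0 := by
      intro t ht
      by_cases htw : t = w
      · subst htw; exact evn_self m t
      · have h2 : evn m w v + evn m w t ≤ ∑ z, evn m w z :=
          two_le_sum_nat (f := fun z => evn m w z) (show v ≠ t from Ne.symm ht)
        have hd := hdeg w
        unfold degn at hd
        rw [evn_symm m w v] at h2
        omega
    have hclosed : ∀ a ∈ ({v, w} : Set (Fin n)), ∀ b,
        (supportGraph (fun e => (m e : ℝ))).Adj a b → b ∈ ({v, w} : Set (Fin n)) := by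
      intro a ha b hadj
      obtain ⟨hne, hpos⟩ := (support_adj_nat m a b).mp hadj
      rcases ha with ha | ha
      · subst ha
        by_cases hbw : b = w
        · exact Or.inr hbw
        · rw [hvz b hbw] at hpos; omega
      · simp only [Set.mem_singleton_iff] at ha
        subst ha
        by_cases hbv : b = v
        · exact Or.inl hbv
        · rw [hwz b hbv] at hpos; omega
    have hcard : ¬ (∀ t : Fin n, t = v ∨ t = w) := by
      intro hall
      have hsub : (Finset.univ : Finset (Fin n)) ⊆ {v, w} := by
        intro t _
        rcases hall t with h | h <;> simp [h]
      have h1 := Finset.card_le_card hsub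
      have h2 : ({v, w} : Finset (Fin n)).card ≤ 2 := by
        apply le_trans (Finset.card_insert_le _ _)
        simp
      rw [Finset.card_univ, Fintype.card_fin] at h1
      omega
    push_neg at hcard
    obtain ⟨t, ht1, ht2⟩ := hcard
    obtain ⟨wk⟩ := (hx.2.1).preconnected v t
    have := closed_walk hclosed wk (Or.inl rfl)
    rcases this with h | h
    · exact ht1 h
    · exact ht2 h
  -- step 2 : every vertex has exactly two neighbours
  have hcard2 : ∀ v, (Finset.univ.filter (fun w => evn m v w = 1)).card = 2 := by
    intro v
    have hsum : degn m v = ∑ w, (if evn m v w = 1 then 1 else 0) := by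
      unfold degn
      refine Finset.sum_congr rfl fun w _ => ?_
      by_cases h1 : evn m v w = 1
      · rw [if_pos h1, h1]
      · rw [if_neg h1]
        have := hle1 v w
        omega
    rw [hdeg v] at hsum
    rw [Finset.sum_boole] at hsum
    exact_mod_cast hsum.symm
  have hpair : ∀ v, ∃ pr : Fin n × Fin n, pr.1 ≠ pr.2 ∧
      Finset.univ.filter (fun w => evn m v w = 1) = {pr.1, pr.2} := by
    intro v
    obtain ⟨a, b, hab, hset⟩ := Finset.card_eq_two.mp (hcard2 v)
    exact ⟨(a, b), hab, hset⟩
  set nb : Fin n → Fin n × Fin n := fun v => (hpair v).choose with hnbdef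
  have hnb1 : ∀ v, evn m v (nb v).1 = 1 := by
    intro v
    have hspec := (hpair v).choose_spec
    have : (nb v).1 ∈ Finset.univ.filter (fun w => evn m v w = 1) := by
      rw [hspec.2]; simp [hnbdef]
    exact (Finset.mem_filter.mp this).2
  have hnb2 : ∀ v, evn m v (nb v).2 = 1 := by
    intro v
    have hspec := (hpair v).choose_spec
    have : (nb v).2 ∈ Finset.univ.filter (fun w => evn m v w = 1) := by
      rw [hspec.2]; simp [hnbdef]
    exact (Finset.mem_filter.mp this).2
  have hnbne : ∀ v, (nb v).1 ≠ (nb v).2 := fun v => (hpair v).choose_spec.1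
  have hnbmem : ∀ v w, evn m v w = 1 → w = (nb v).1 ∨ w = (nb v).2 := by
    intro v w hw
    have hspec := (hpair v).choose_spec
    have : w ∈ Finset.univ.filter (fun z => evn m v z = 1) :=
      Finset.mem_filter.mpr ⟨Finset.mem_univ _, hw⟩
    rw [hspec.2] at this
    simpa using this
  set oth : Fin n → Fin n → Fin n :=
    fun prev cur => if prev = (nb cur).1 then (nb cur).2 else (nb cur).1 with hothdef
  have hO1 : ∀ prev cur, evn m cur (oth prev cur) = 1 := by
    intro prev cur
    show evn m cur (if prev = (nb cur).1 then (nb cur).2 else (nb cur).1) = 1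
    by_cases h : prev = (nb cur).1
    · rw [if_pos h]; exact hnb2 cur
    · rw [if_neg h]; exact hnb1 cur
  have hO2 : ∀ prev cur, oth prev cur ≠ prev := by
    intro prev cur
    show (if prev = (nb cur).1 then (nb cur).2 else (nb cur).1) ≠ prev
    by_cases h : prev = (nb cur).1
    · rw [if_pos h, h]; exact (hnbne cur).symm
    · rw [if_neg h]; exact fun hc => h hc.symm
  have hOuniq : ∀ cur a b, a ≠ b → evn m cur a = 1 → evn m cur b = 1 →
      ∀ w, evn m cur w = 1 → w = a ∨ w = b := by
    intro cur a b hab ha hb w hw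
    rcases hnbmem cur a ha with h1 | h1 <;> rcases hnbmem cur b hb with h2 | h2 <;>
      rcases hnbmem cur w hw with h3 | h3 <;> subst_vars <;> tauto
  -- step 3 : the walk
  have hnpos : 0 < n := by omega
  set v0 : Fin n := ⟨0, hnpos⟩ with hv0def
  set st : ℕ → Fin n × Fin n :=
    fun k => Nat.rec (v0, (nb v0).1) (fun _ pr => (pr.2, oth pr.1 pr.2)) k with hstdef
  set seq : ℕ → Fin n := fun k => (st k).1 with hseqdef
  have hsucc : ∀ k, seq (k + 1) = (st k).2 := fun k => rfl
  have hseq0 : seq 0 = v0 := rfl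
  have hstep : ∀ k, seq (k + 2) = oth (seq k) (seq (k + 1)) := fun k => rfl
  have hI1 : ∀ k, evn m (seq k) (seq (k + 1)) = 1 := by
    intro k
    cases k with
    | zero => exact hnb1 v0
    | succ j =>
      rw [hstep j]
      exact hO1 (seq j) (seq (j + 1))
  have hI2 : ∀ k, seq (k + 2) ≠ seq k := by
    intro k
    rw [hstep k]
    exact hO2 (seq k) (seq (k + 1))
  have hI3 : ∀ k, seq (k + 1) ≠ seq k := by
    intro k
    exact Ne.symm (evn_ne_of_pos (by rw [hI1 k]))
  -- step 4 : first repetition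
  have hP : ∃ b, ∃ a, a < b ∧ seq a = seq b := by
    obtain ⟨i, j, hij, heq⟩ := Fintype.exists_ne_map_eq_of_card_lt
      (fun i : Fin (n + 1) => seq i.val) (by simp)
    rcases lt_trichotomy i.val j.val with h | h | h
    · exact ⟨j.val, i.val, h, heq⟩
    · exact absurd (Fin.ext h) hij
    · exact ⟨i.val, j.val, h, heq.symm⟩
  set L : ℕ := Nat.find hP with hLdef
  obtain ⟨a, haL, haeq⟩ : ∃ a, a < L ∧ seq a = seq L := Nat.find_spec hP
  have hinj : ∀ i j, i < j → j < L → seq i ≠ seq j := by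
    intro i j hij hjL hcontra
    exact Nat.find_min hP hjL ⟨i, hij, hcontra⟩
  have ha0 : a = 0 := by
    by_contra ha
    have ha1 : 1 ≤ a := by omega
    have e1 : a - 1 + 1 = a := by omega
    have e2 : L - 1 + 1 = L := by omega
    have hLnb : evn m (seq a) (seq (L - 1)) = 1 := by
      have h1 := hI1 (L - 1)
      rw [e2] at h1
      rw [evn_symm] at h1
      rw [haeq]
      exact h1
    have hprev : evn m (seq a) (seq (a - 1)) = 1 := by
      have h1 := hI1 (a - 1)
      rw [e1] at h1
      rw [evn_symm] at h1
      exact h1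
    have hnxt : evn m (seq a) (seq (a + 1)) = 1 := hI1 a
    have hdist : seq (a - 1) ≠ seq (a + 1) := by
      intro h
      have h2 := hI2 (a - 1)
      rw [show a - 1 + 2 = a + 1 by omega] at h2
      exact h2 h.symm
    rcases hOuniq (seq a) (seq (a - 1)) (seq (a + 1)) hdist hprev hnxt (seq (L - 1)) hLnb
      with hc | hc
    · have hlt : a - 1 < L - 1 := by omega
      exact hinj (a - 1) (L - 1) hlt (by omega) hc.symm
    · rcases lt_trichotomy (a + 1) (L - 1) with h | h | h
      · exact hinj (a + 1) (L - 1) h (by omega) hc.symm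
      · have hthis : seq a = seq (a + 2) := by
          rw [haeq, show L = a + 2 by omega]
        exact hI2 a hthis.symm
      · have hthis : seq a = seq (a + 1) := by
          rw [haeq, show L = a + 1 by omega]
        exact hI3 a hthis.symm
  subst ha0
  have hL1 : 0 < L := by omega
  have hL3 : 3 ≤ L := by
    by_contra hcon
    push_neg at hcon
    have : L = 1 ∨ L = 2 := by omega
    rcases this with h | h
    · rw [h] at haeq
      exact hI3 0 haeq.symm
    · rw [h] at haeq
      exact hI2 0 haeq.symm
  have hLn : L ≤ n := by
    by_contra hcon
    push_neg at hcon
    have hinj' : Function.Injective (fun i : Fin (n + 1) => seq i.val) := by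
      intro i j hij
      by_contra hne
      rcases lt_trichotomy i.val j.val with h | h | h
      · exact hinj i.val j.val h (by have := j.isLt; omega) hij
      · exact hne (Fin.ext h)
      · exact hinj j.val i.val h (by have := i.isLt; omega) hij.symm
    have := Fintype.card_le_of_injective _ hinj'
    rw [Fintype.card_fin, Fintype.card_fin] at this
    omega
  have hwrap : ∀ i, i < L → seq ((i + 1) % L) = seq (i + 1) := by
    intro i hiL
    by_cases h : i + 1 < L
    · rw [Nat.mod_eq_of_lt h]
    · have h1 : i + 1 = L := by omega
      rw [h1, Nat.mod_self, ← haeq]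
  -- surjectivity
  have hSurj : ∀ t : Fin n, ∃ i, i < L ∧ seq i = t := by
    have hclosed : ∀ a ∈ {v : Fin n | ∃ i, i < L ∧ seq i = v}, ∀ b,
        (supportGraph (fun e => (m e : ℝ))).Adj a b →
          b ∈ {v : Fin n | ∃ i, i < L ∧ seq i = v} := by
      rintro a ⟨i, hiL, rfl⟩ b hadj
      obtain ⟨hne, hpos⟩ := (support_adj_nat m (seq i) b).mp hadj
      have hevb : evn m (seq i) b = 1 := by
        have := hle1 (seq i) b
        omega
      have hev1 : evn m (seq i) (seq ((i + 1) % L)) = 1 := by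
        rw [hwrap i hiL]
        exact hI1 i
      have hev2 : evn m (seq i) (seq ((i + L - 1) % L)) = 1 := by
        by_cases hi0 : i = 0
        · subst hi0
          have he : (0 + L - 1) % L = L - 1 := by
            have h1 : 0 + L - 1 = L - 1 := by omega
            rw [h1, Nat.mod_eq_of_lt (by omega)]
          rw [he, haeq]
          have h2 : L - 1 + 1 = L := by omega
          have h3 := hI1 (L - 1)
          rw [h2] at h3
          rw [evn_symm] at h3
          exact h3
        · have he : (i + L - 1) % L = i - 1 := by
            have h1 : i + L - 1 = (i - 1) + L := by omega
            rw [h1, Nat.add_mod_right, Nat.mod_eq_of_lt (by omega)]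
          rw [he]
          have h2 : i - 1 + 1 = i := by omega
          have h3 := hI1 (i - 1)
          rw [h2] at h3
          rw [evn_symm] at h3
          exact h3
      have hj1L : (i + 1) % L < L := Nat.mod_lt _ (by omega)
      have hj2L : (i + L - 1) % L < L := Nat.mod_lt _ (by omega)
      have hjne : (i + 1) % L ≠ (i + L - 1) % L := by
        by_cases hi0 : i = 0
        · subst hi0
          have he : (0 + L - 1) % L = L - 1 := by
            have h1 : 0 + L - 1 = L - 1 := by omega
            rw [h1, Nat.mod_eq_of_lt (by omega)]
          have he2 : (0 + 1) % L = 1 := by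
            rw [Nat.mod_eq_of_lt (by omega)]
          rw [he, he2]
          omega
        · have he : (i + L - 1) % L = i - 1 := by
            have h1 : i + L - 1 = (i - 1) + L := by omega
            rw [h1, Nat.add_mod_right, Nat.mod_eq_of_lt (by omega)]
          rw [he]
          by_cases h : i + 1 < L
          · rw [Nat.mod_eq_of_lt h]
            omega
          · have h1 : i + 1 = L := by omega
            rw [h1, Nat.mod_self]
            omega
      have hj12 : seq ((i + 1) % L) ≠ seq ((i + L - 1) % L) := by
        rcases lt_trichotomy ((i + 1) % L) ((i + L - 1) % L) with h | h | h
        · exact hinj _ _ h hj2L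
        · exact absurd h hjne
        · exact fun hc => hinj _ _ h hj1L hc.symm
      rcases hOuniq (seq i) (seq ((i + 1) % L)) (seq ((i + L - 1) % L)) hj12 hev1 hev2
        b hevb with hc | hc
      · exact ⟨(i + 1) % L, hj1L, hc.symm⟩
      · exact ⟨(i + L - 1) % L, hj2L, hc.symm⟩
    intro t
    obtain ⟨wk⟩ := (hx.2.1).preconnected v0 t
    exact closed_walk hclosed wk ⟨0, hL1, hseq0⟩
  -- L = n
  have hLn' : L = n := by
    have hbij : Function.Bijective (fun i : Fin L => seq i.val) := by
      constructor
      · intro i j hij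
        by_contra hne
        rcases lt_trichotomy i.val j.val with h | h | h
        · exact hinj i.val j.val h j.isLt hij
        · exact hne (Fin.ext h)
        · exact hinj j.val i.val h i.isLt hij.symm
      · intro t
        obtain ⟨i, hiL, hit⟩ := hSurj t
        exact ⟨⟨i, hiL⟩, hit⟩
    have := Fintype.card_of_bijective hbij
    simpa using this
  -- the permutation
  have hbijn : Function.Bijective (fun i : Fin n => seq i.val) := by
    constructor
    · intro i j hij
      by_contra hne
      rcases lt_trichotomy i.val j.val with h | h | h
      · exact hinj i.val j.val h (by have := j.isLt; omega) hij
      · exact hne (Fin.ext h)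
      · exact hinj j.val i.val h (by have := i.isLt; omega) hij.symm
    · intro t
      obtain ⟨i, hiL, hit⟩ := hSurj t
      exact ⟨⟨i, by omega⟩, hit⟩
  set σ : Equiv.Perm (Fin n) := Equiv.ofBijective _ hbijn with hσdef
  have hσ : ∀ i : Fin n, σ i = seq i.val := fun i => rfl
  have hnext : ∀ i : Fin n, σ (nextF i) = seq (i.val + 1) := by
    intro i
    have h1 : σ (nextF i) = seq ((i.val + 1) % n) := rfl
    rw [h1]
    have hw := hwrap i.val (by have := i.isLt; omega)
    rw [hLn'] at hw
    exact hw
  refine ⟨σ, funext fun e => ?_⟩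
  show (m e : ℝ) = hamVec σ e
  unfold hamVec
  by_cases hcond : ∃ i : Fin n, e.val = s(σ i, σ (nextF i))
  · rw [if_pos hcond]
    obtain ⟨i, hi⟩ := hcond
    rw [hσ i, hnext i] at hi
    have hne : seq i.val ≠ seq (i.val + 1) := Ne.symm (hI3 i.val)
    have hme : m e = evn m (seq i.val) (seq (i.val + 1)) := by
      rw [evn_of_ne m hne]
      congr 1
      exact Subtype.ext hi
    rw [hme, hI1 i.val]
    norm_num
  · rw [if_neg hcond]
    by_contra hme
    have hme1 : 1 ≤ m e := by
      by_contra h0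
      push_neg at h0
      have h00 : m e = 0 := by omega
      exact hme (by rw [h00]; norm_num)
    have hrep : ∀ z : Sym2 (Fin n), ∃ v w, z = s(v, w) := fun z =>
      Sym2.ind (fun v w => ⟨v, w, rfl⟩) z
    obtain ⟨v, w, hvw⟩ := hrep e.val
    have hvwne : v ≠ w := by
      intro hc
      apply e.prop
      rw [hvw, hc]
      exact Sym2.mk_isDiag_iff.mpr rfl
    have hevvw : evn m v w = 1 := by
      have h1 : evn m v w = m e := by
        rw [evn_of_ne m hvwne]
        congr 1
        exact Subtype.ext hvw.symm
      have := hle1 v w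
      omega
    obtain ⟨i, hiL, hiv⟩ := hSurj v
    have hev1 : evn m (seq i) (seq ((i + 1) % L)) = 1 := by
      rw [hwrap i hiL]; exact hI1 i
    have hev2 : evn m (seq i) (seq ((i + L - 1) % L)) = 1 := by
      by_cases hi0 : i = 0
      · subst hi0
        have he : (0 + L - 1) % L = L - 1 := by
          have h1 : 0 + L - 1 = L - 1 := by omega
          rw [h1, Nat.mod_eq_of_lt (by omega)]
        rw [he, haeq]
        have h2 : L - 1 + 1 = L := by omega
        have h3 := hI1 (L - 1)
        rw [h2] at h3
        rw [evn_symm] at h3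
        exact h3
      · have he : (i + L - 1) % L = i - 1 := by
          have h1 : i + L - 1 = (i - 1) + L := by omega
          rw [h1, Nat.add_mod_right, Nat.mod_eq_of_lt (by omega)]
        rw [he]
        have h2 : i - 1 + 1 = i := by omega
        have h3 := hI1 (i - 1)
        rw [h2] at h3
        rw [evn_symm] at h3
        exact h3
    have hj1L : (i + 1) % L < L := Nat.mod_lt _ (by omega)
    have hj2L : (i + L - 1) % L < L := Nat.mod_lt _ (by omega)
    have hjne : (i + 1) % L ≠ (i + L - 1) % L := by
      by_cases hi0 : i = 0
      · subst hi0
        have he : (0 + L - 1) % L = L - 1 := by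
          have h1 : 0 + L - 1 = L - 1 := by omega
          rw [h1, Nat.mod_eq_of_lt (by omega)]
        have he2 : (0 + 1) % L = 1 := by rw [Nat.mod_eq_of_lt (by omega)]
        rw [he, he2]
        omega
      · have he : (i + L - 1) % L = i - 1 := by
          have h1 : i + L - 1 = (i - 1) + L := by omega
          rw [h1, Nat.add_mod_right, Nat.mod_eq_of_lt (by omega)]
        rw [he]
        by_cases h : i + 1 < L
        · rw [Nat.mod_eq_of_lt h]; omega
        · have h1 : i + 1 = L := by omega
          rw [h1, Nat.mod_self]; omega
    have hj12 : seq ((i + 1) % L) ≠ seq ((i + L - 1) % L) := by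
      rcases lt_trichotomy ((i + 1) % L) ((i + L - 1) % L) with h | h | h
      · exact hinj _ _ h hj2L
      · exact absurd h hjne
      · exact fun hc => hinj _ _ h hj1L hc.symm
    have hevw : evn m (seq i) w = 1 := by rw [hiv]; exact hevvw
    rcases hOuniq (seq i) (seq ((i + 1) % L)) (seq ((i + L - 1) % L)) hj12 hev1 hev2
      w hevw with hc | hc
    · apply hcond
      refine ⟨⟨i, by omega⟩, ?_⟩
      show e.val = s(seq i, seq ((i + 1) % n))
      have hidx := hwrap i hiL
      rw [hLn'] at hidx
      rw [hidx, hvw, ← hiv, hc, hwrap i hiL]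
    · apply hcond
      have hkey2 : seq (((i + L - 1) % L + 1) % n) = seq i := by
        by_cases hi0 : i = 0
        · subst hi0
          have he : (0 + L - 1) % L = L - 1 := by
            have h1 : 0 + L - 1 = L - 1 := by omega
            rw [h1, Nat.mod_eq_of_lt (by omega)]
          rw [he]
          have h2 : (L - 1 + 1) % n = 0 := by
            have h3 : L - 1 + 1 = n := by omega
            rw [h3, Nat.mod_self]
          rw [h2]
        · have he : (i + L - 1) % L = i - 1 := by
            have h1 : i + L - 1 = (i - 1) + L := by omega
            rw [h1, Nat.add_mod_right, Nat.mod_eq_of_lt (by omega)]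
          rw [he]
          have h2 : (i - 1 + 1) % n = i := by
            have h3 : i - 1 + 1 = i := by omega
            rw [h3, Nat.mod_eq_of_lt (by omega)]
          rw [h2]
      refine ⟨⟨(i + L - 1) % L, by omega⟩, ?_⟩
      show e.val = s(seq ((i + L - 1) % L), seq (((i + L - 1) % L + 1) % n))
      rw [hkey2, hvw, ← hiv, hc]
      exact Sym2.eq_swap

end Aux11e

section Aux11f
open Finset

variable {n : ℕ}

lemma eulerian_mem_gtsp {x : Edge n → ℝ} (hx : IsEulerian x) : x ∈ gtsp n :=
  subset_convexHull ℝ _ hx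

lemma eulerian_nonneg' {x : Edge n → ℝ} (hx : IsEulerian x) (e : Edge n) : 0 ≤ x e := by
  obtain ⟨k, hk⟩ := hx.1 e
  rw [hk]
  positivity

lemma dot_eq_zero_of_mem_direc {c : Edge n → ℝ} {γ : ℝ} {S : Set (Edge n → ℝ)}
    (hS : ∀ z ∈ S, dot c z = γ) {d : Edge n → ℝ} (hd : d ∈ direc S) : dot c d = 0 := by
  let φ : (Edge n → ℝ) →ₗ[ℝ] ℝ :=
    { toFun := dot c
      map_add' := fun u v => dot_add_right c u v
      map_smul' := fun r u => by
        simp only [RingHom.id_apply, smul_eq_mul]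
        exact dot_smul_right c r u }
  have hker : direc S ≤ LinearMap.ker φ := by
    rw [direc, Submodule.span_le]
    rintro d' ⟨u, hu, v, hv, rfl⟩
    simp only [SetLike.mem_coe, LinearMap.mem_ker]
    show dot c (v - u) = 0
    rw [dot_sub_right, hS v hv, hS u hu]
    ring
  have := hker hd
  simpa [φ] using this

lemma face_decomp {a : Edge n → ℝ} {α : ℝ}
    (hva : ∀ y ∈ gtsp n, α ≤ dot a y) {z : Edge n → ℝ}
    (hz : z ∈ gtsp n) (hzα : dot a z = α) :
    ∃ (ι : Type) (t : Finset ι) (w : ι → ℝ) (g : ι → Edge n → ℝ),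
      (∀ i ∈ t, 0 ≤ w i) ∧ (∑ i ∈ t, w i = 1) ∧ (∀ i ∈ t, IsEulerian (g i)) ∧
      (∀ i ∈ t, w i ≠ 0 → dot a (g i) = α) ∧ z = ∑ i ∈ t, w i • g i := by
  unfold gtsp at hz
  rw [_root_.convexHull_eq] at hz
  obtain ⟨ι, t, w, g, hw0, hw1, hgS, hcm⟩ := hz
  have hsum : z = ∑ i ∈ t, w i • g i := by
    rw [← hcm, Finset.centerMass_eq_of_sum_1 _ _ hw1]
  have hdz : ∑ i ∈ t, w i * (dot a (g i) - α) = 0 := by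
    have h1 : dot a z = ∑ i ∈ t, w i * dot a (g i) := by
      rw [hsum, dot_sum_right]
      exact Finset.sum_congr rfl fun i _ => dot_smul_right a (w i) (g i)
    have h2 : ∑ i ∈ t, w i * (dot a (g i) - α)
        = (∑ i ∈ t, w i * dot a (g i)) - (∑ i ∈ t, w i) * α := by
      rw [Finset.sum_mul, ← Finset.sum_sub_distrib]
      exact Finset.sum_congr rfl fun i _ => by ring
    rw [h2, ← h1, hw1, hzα]
    ring
  have htight : ∀ i ∈ t, w i ≠ 0 → dot a (g i) = α := by
    intro i hi hwi
    have hnn : ∀ j ∈ t, 0 ≤ w j * (dot a (g j) - α) := fun j hj =>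
      mul_nonneg (hw0 j hj)
        (by have := hva (g j) (subset_convexHull ℝ _ (hgS j hj)); linarith)
    have h0 := (Finset.sum_eq_zero_iff_of_nonneg hnn).mp hdz i hi
    rcases mul_eq_zero.mp h0 with h | h
    · exact absurd h hwi
    · linarith
  exact ⟨ι, t, w, g, hw0, hw1, hgS, htight, hsum⟩

lemma metric_of_good {a : Edge n → ℝ} {α : ℝ} (hva : ∀ y ∈ gtsp n, α ≤ dot a y)
    (hgood : IsGood {x ∈ gtsp n | dot a x = α}) :
    ∀ u p q : Fin n, RootedTri u p q → dot a (shortcut u p q) ≤ 0 := by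
  intro u p q htri
  obtain ⟨z, hzF, hze⟩ := hgood (mkE htri.1)
  obtain ⟨hzg, hzα⟩ := hzF
  obtain ⟨ι, t, w, g, hw0, hw1, hgE, htight, hsum⟩ := face_decomp hva hzg hzα
  have hz_e : z (mkE htri.1) = ∑ i ∈ t, w i * g i (mkE htri.1) := by
    rw [hsum, Finset.sum_apply]
    exact Finset.sum_congr rfl fun i _ => rfl
  have hex : ∃ i ∈ t, 0 < w i * g i (mkE htri.1) := by
    by_contra hno
    push_neg at hno
    have hle := Finset.sum_nonpos hno
    rw [← hz_e] at hle
    linarith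
  obtain ⟨i, hit, hipos⟩ := hex
  have hgnn : 0 ≤ g i (mkE htri.1) := eulerian_nonneg' (hgE i hit) _
  have hwi : 0 < w i := by nlinarith
  have hgpos : 0 < g i (mkE htri.1) := by nlinarith
  obtain ⟨mi, hmi⟩ := eulerian_choose (hgE i hit)
  have hmi1 : 1 ≤ mi (mkE htri.1) := by
    have h1 : (0:ℝ) < mi (mkE htri.1) := by
      rw [hmi] at hgpos
      exact hgpos
    exact_mod_cast h1
  have hEdetour : IsEulerian ((fun e => (mi e : ℝ)) - shortcut u p q) :=
    eulerian_detour (hmi ▸ hgE i hit) htri hmi1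
  have hval := hva _ (eulerian_mem_gtsp hEdetour)
  have hdot : dot a ((fun e => (mi e : ℝ)) - shortcut u p q)
      = α - dot a (shortcut u p q) := by
    rw [dot_sub_right, ← hmi, htight i hit (ne_of_gt hwi)]
  rw [hdot] at hval
  linarith

lemma key_step {a b : Edge n → ℝ} {α β : ℝ} (hn : 3 ≤ n)
    (hva : ∀ y ∈ gtsp n, α ≤ dot a y)
    (hmet : ∀ u p q : Fin n, RootedTri u p q → dot a (shortcut u p q) ≤ 0)
    (hdir : ∀ u p q : Fin n, RootedTri u p q →
      shortcut u p q ∈ direc {x ∈ gtsp n | dot a x = α} → dot b (shortcut u p q) = 0)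
    (hcyc : ∀ σ : Equiv.Perm (Fin n), IsEulerian (hamVec σ) → dot a (hamVec σ) = α →
      dot b (hamVec σ) = β) :
    ∀ x, IsEulerian x → dot a x = α → dot b x = β := by
  suffices h : ∀ T : ℕ, ∀ m : Edge n → ℕ, IsEulerian (fun e => (m e : ℝ)) →
      (∑ e, m e = T) → dot a (fun e => (m e : ℝ)) = α →
      dot b (fun e => (m e : ℝ)) = β by
    intro x hx hxa
    obtain ⟨m, rfl⟩ := eulerian_choose hx
    exact h (∑ e, m e) m hx rfl hxa
  intro T
  induction T using Nat.strong_induction_on with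
  | _ T ih =>
    intro m hm hmT hma
    by_cases hreg : ∀ v, degn m v = 2
    · obtain ⟨σ, hσ⟩ := ham_of_two_regular hn hm hreg
      rw [hσ] at hma ⊢
      exact hcyc σ (hσ ▸ hm) hma
    · push_neg at hreg
      obtain ⟨v, hv⟩ := hreg
      have hv4 : 4 ≤ degn m v := by
        obtain ⟨k, hk, hdk⟩ := eulerian_degn hm v
        omega
      obtain ⟨u, p, q, htri, hE'⟩ := split_lemma hn hm hv4
      have hx'g : (fun e => (m e : ℝ)) + shortcut u p q ∈ gtsp n := eulerian_mem_gtsp hE'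
      have hax' : dot a ((fun e => (m e : ℝ)) + shortcut u p q)
          = dot a (fun e => (m e : ℝ)) + dot a (shortcut u p q) := dot_add_right _ _ _
      have hge := hva _ hx'g
      have hle := hmet u p q htri
      have hs0 : dot a (shortcut u p q) = 0 := by
        rw [hax', hma] at hge
        linarith
      have hax'α : dot a ((fun e => (m e : ℝ)) + shortcut u p q) = α := by
        rw [hax', hma, hs0]; ring
      have hsF : shortcut u p q ∈ direc {y ∈ gtsp n | dot a y = α} := by
        apply Submodule.subset_span
        refine ⟨(fun e => (m e : ℝ)), ⟨eulerian_mem_gtsp hm, hma⟩,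
          (fun e => (m e : ℝ)) + shortcut u p q, ⟨hx'g, hax'α⟩, ?_⟩
        rw [add_sub_cancel_left]
      have hbs := hdir u p q htri hsF
      obtain ⟨m', hm'⟩ := eulerian_choose hE'
      have hsum' : ((∑ e, m' e : ℕ) : ℝ) = (T : ℝ) - 1 := by
        have h1 : ∀ e, (m' e : ℝ) = ((fun e => (m e : ℝ)) + shortcut u p q) e :=
          fun e => (congrFun hm' e).symm
        have h2 : ((∑ e, m' e : ℕ) : ℝ) = ∑ e, ((fun e => (m e : ℝ)) + shortcut u p q) e := by
          push_cast
          exact Finset.sum_congr rfl fun e _ => h1 e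
        rw [h2]
        have h3 : ∑ e, ((fun e => (m e : ℝ)) + shortcut u p q) e
            = (∑ e, (m e : ℝ)) + ∑ e, shortcut u p q e := by
          rw [← Finset.sum_add_distrib]
          exact Finset.sum_congr rfl fun e _ => rfl
        rw [h3, sum_shortcut htri]
        have h4 : ∑ e, ((m e : ℕ) : ℝ) = (T : ℝ) := by
          rw [← hmT]
          push_cast
          rfl
        rw [h4]
        ring
      have hlt : ∑ e, m' e < T := by
        have h5 : ((∑ e, m' e : ℕ) : ℝ) + 1 = (T : ℝ) := by rw [hsum']; ring
        have h6 : (∑ e, m' e) + 1 = T := by exact_mod_cast h5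
        omega
      have hbx' := ih (∑ e, m' e) hlt m' (hm' ▸ hE') rfl (by rw [← hm']; exact hax'α)
      rw [← hm'] at hbx'
      have hbx : dot b ((fun e => (m e : ℝ)) + shortcut u p q)
          = dot b (fun e => (m e : ℝ)) + dot b (shortcut u p q) := dot_add_right _ _ _
      rw [hbx, hbs] at hbx'
      linarith

lemma face_subset {a b : Edge n → ℝ} {α β : ℝ}
    (hva : ∀ y ∈ gtsp n, α ≤ dot a y)
    (hkey : ∀ x, IsEulerian x → dot a x = α → dot b x = β) :
    ∀ x, x ∈ gtsp n → dot a x = α → dot b x = β := by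
  intro x hxg hxα
  obtain ⟨ι, t, w, g, hw0, hw1, hgE, htight, hsum⟩ := face_decomp hva hxg hxα
  have h1 : dot b x = ∑ i ∈ t, w i * dot b (g i) := by
    rw [hsum, dot_sum_right]
    exact Finset.sum_congr rfl fun i _ => dot_smul_right b (w i) (g i)
  have hterm : ∀ i ∈ t, w i * dot b (g i) = w i * β := by
    intro i hi
    by_cases hwi : w i = 0
    · rw [hwi]; ring
    · rw [hkey (g i) (hgE i hi) (htight i hi hwi)]
  rw [h1, Finset.sum_congr rfl hterm, ← Finset.sum_mul, hw1, one_mul]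

end Aux11f

/-- a nonempty good face of `P` is uniquely determined by its
Hamiltonian cycles and its feasible shortcuts. -/
theorem stmt11 (n : ℕ) (hn : 5 ≤ n) (F G : Set (Edge n → ℝ))
    (hF : IsFaceOf (gtsp n) F) (hG : IsFaceOf (gtsp n) G)
    (hFne : F.Nonempty) (hGne : G.Nonempty)
    (hFgood : IsGood F) (hGgood : IsGood G)
    (hcyc : ∀ σ : Equiv.Perm (Fin n), hamVec σ ∈ F ↔ hamVec σ ∈ G)
    (hsc : ∀ u v w : Fin n, RootedTri u v w →
      (shortcut u v w ∈ direc F ↔ shortcut u v w ∈ direc G)) :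
    F = G := by
  obtain ⟨a, α, hva, hFeq⟩ := hF
  obtain ⟨b, β, hvb, hGeq⟩ := hG
  have hn3 : 3 ≤ n := by omega
  have hmeta : ∀ u p q : Fin n, RootedTri u p q → dot a (shortcut u p q) ≤ 0 :=
    metric_of_good hva (hFeq ▸ hFgood)
  have hmetb : ∀ u p q : Fin n, RootedTri u p q → dot b (shortcut u p q) ≤ 0 :=
    metric_of_good hvb (hGeq ▸ hGgood)
  have hdirF : ∀ u p q : Fin n, RootedTri u p q →
      shortcut u p q ∈ direc {x ∈ gtsp n | dot a x = α} →
      dot b (shortcut u p q) = 0 := by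
    intro u p q htri hmem
    have h1 : shortcut u p q ∈ direc F := by rw [hFeq]; exact hmem
    have h2 : shortcut u p q ∈ direc G := (hsc u p q htri).mp h1
    refine dot_eq_zero_of_mem_direc (γ := β) ?_ h2
    intro z hz
    rw [hGeq] at hz
    exact hz.2
  have hdirG : ∀ u p q : Fin n, RootedTri u p q →
      shortcut u p q ∈ direc {x ∈ gtsp n | dot b x = β} →
      dot a (shortcut u p q) = 0 := by
    intro u p q htri hmem
    have h1 : shortcut u p q ∈ direc G := by rw [hGeq]; exact hmem
    have h2 : shortcut u p q ∈ direc F := (hsc u p q htri).mpr h1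
    refine dot_eq_zero_of_mem_direc (γ := α) ?_ h2
    intro z hz
    rw [hFeq] at hz
    exact hz.2
  have hcycF : ∀ σ : Equiv.Perm (Fin n), IsEulerian (hamVec σ) →
      dot a (hamVec σ) = α → dot b (hamVec σ) = β := by
    intro σ hE hα
    have hFmem : hamVec σ ∈ F := by
      rw [hFeq]; exact ⟨eulerian_mem_gtsp hE, hα⟩
    have hGmem := (hcyc σ).mp hFmem
    rw [hGeq] at hGmem
    exact hGmem.2
  have hcycG : ∀ σ : Equiv.Perm (Fin n), IsEulerian (hamVec σ) →
      dot b (hamVec σ) = β → dot a (hamVec σ) = α := by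
    intro σ hE hβ
    have hGmem : hamVec σ ∈ G := by
      rw [hGeq]; exact ⟨eulerian_mem_gtsp hE, hβ⟩
    have hFmem := (hcyc σ).mpr hGmem
    rw [hFeq] at hFmem
    exact hFmem.2
  have hkeyF : ∀ x, IsEulerian x → dot a x = α → dot b x = β :=
    key_step hn3 hva hmeta hdirF hcycF
  have hkeyG : ∀ x, IsEulerian x → dot b x = β → dot a x = α :=
    key_step hn3 hvb hmetb hdirG hcycG
  ext x
  constructor
  · intro hxF
    rw [hFeq] at hxF
    obtain ⟨hxg, hxα⟩ := hxF
    rw [hGeq]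
    exact ⟨hxg, face_subset hva hkeyF x hxg hxα⟩
  · intro hxG
    rw [hGeq] at hxG
    obtain ⟨hxg, hxβ⟩ := hxG
    rw [hFeq]
    exact ⟨hxg, face_subset hvb hkeyG x hxg hxβ⟩

end TSP
end

section
/- For every a ∈ D_S one has γ(a) > 0. -/
open scoped BigOperators

namespace TSP
variable {n : ℕ}
section AuxStmt13
variable {n : ℕ}

lemma sum_ite_sym2 {v w : Fin n} (hvw : v ≠ w) (f : Fin n → ℝ) :
    ∑ u, (if u ∈ s(v, w) then f u else 0) = f v + f w := by
  classical
  have h : ∀ u : Fin n, (if u ∈ s(v, w) then f u else 0)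
      = (if u ∈ ({v, w} : Finset (Fin n)) then f u else 0) := by
    intro u; simp [Sym2.mem_iff]
  rw [Finset.sum_congr rfl fun u _ => h u, Finset.sum_ite_mem,
    Finset.univ_inter, Finset.sum_pair hvw]

lemma edge_rep (e : Edge n) : ∃ v w : Fin n, v ≠ w ∧ e.val = s(v, w) := by
  obtain ⟨v, w, h⟩ :=
    Sym2.inductionOn (f := fun z => ∃ v w : Fin n, z = s(v, w)) e.val
      fun x y => ⟨x, y, rfl⟩
  exact ⟨v, w, fun hvw => e.prop (by rw [h]; exact Sym2.mk_isDiag_iff.mpr hvw), h⟩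

lemma lam_le (a : Edge n → ℝ) {u v w : Fin n} (h : RootedTri u v w) :
    lam a u ≤ tri a u v w := by
  have hfin : {r | ∃ v w, RootedTri u v w ∧ r = tri a u v w}.Finite := by
    apply Set.Finite.subset (Set.finite_range (fun p : Fin n × Fin n => tri a u p.1 p.2))
    rintro r ⟨v, w, _, rfl⟩; exact ⟨(v, w), rfl⟩
  exact csInf_le hfin.bddBelow ⟨v, w, h, rfl⟩

lemma ev_eq (a : Edge n → ℝ) {v w : Fin n} (h : v ≠ w) (e : Edge n) (he : e.val = s(v, w)) :
    ev a v w = a e := by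
  rw [ev, dif_neg h]; congr 1; exact Subtype.ext he.symm

lemma theta_apply (a : Edge n → ℝ) {v w : Fin n} (h : v ≠ w) (e : Edge n)
    (he : e.val = s(v, w)) :
    theta a e = a e - (lam a v + lam a w) / 2 := by
  have hd : ∀ u, lam a u * delta u e = if u ∈ s(v, w) then lam a u * (1/2) else 0 := by
    intro u; rw [delta, he, mul_ite, mul_zero]
  show a e - ∑ u, lam a u * delta u e = _
  rw [Finset.sum_congr rfl fun u _ => hd u, sum_ite_sym2 h]
  ring

lemma ev_theta (a : Edge n → ℝ) {v w : Fin n} (h : v ≠ w) :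
    ev (theta a) v w = ev a v w - (lam a v + lam a w) / 2 := by
  set e : Edge n := ⟨s(v, w), fun hd => h (Sym2.mk_isDiag_iff.mp hd)⟩ with he
  rw [ev_eq (theta a) h e rfl, ev_eq a h e rfl, theta_apply a h e rfl]

lemma tri_theta (a : Edge n → ℝ) {u v w : Fin n} (h : RootedTri u v w) :
    tri (theta a) u v w = tri a u v w - lam a u := by
  obtain ⟨hvw, huv, huw⟩ := h
  rw [tri, tri, ev_theta a (Ne.symm huv), ev_theta a huw, ev_theta a hvw]
  ring

lemma theta_nonneg (hn : 5 ≤ n) (a : Edge n → ℝ) (e : Edge n) : 0 ≤ theta a e := by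
  classical
  obtain ⟨v, w, hne, hvw⟩ := edge_rep e
  obtain ⟨u, hu⟩ : ∃ u : Fin n, u ∉ ({v, w} : Finset (Fin n)) := by
    by_contra hc
    push_neg at hc
    have hsub : (Finset.univ : Finset (Fin n)) ⊆ {v, w} := fun u _ => hc u
    have h2 : ({v, w} : Finset (Fin n)).card ≤ 2 :=
      (Finset.card_insert_le v {w}).trans (by simp)
    have h3 := (Finset.card_le_card hsub).trans h2
    rw [Finset.card_univ, Fintype.card_fin] at h3
    omega
  simp only [Finset.mem_insert, Finset.mem_singleton, not_or] at hu
  obtain ⟨huv, huw⟩ := hu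
  have key : ∀ p q r : Fin n, RootedTri p q r → 0 ≤ tri (theta a) p q r := by
    intro p q r h; rw [tri_theta a h]; linarith [lam_le a h]
  have h1 := key v u w ⟨huw, Ne.symm huv, hne⟩
  have h2 := key w u v ⟨huv, Ne.symm huw, Ne.symm hne⟩
  simp only [tri] at h1 h2
  have hsymm : ev (theta a) w v = ev (theta a) v w := ev_symm (theta a) w v
  have hev : ev (theta a) v w = theta a e := ev_eq (theta a) hne e hvw
  linarith

lemma convex_dot_eq (b : Edge n → ℝ) (c : ℝ) : Convex ℝ {x : Edge n → ℝ | dot b x = c} := by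
  intro x hx y hy s t hs ht hst
  simp only [Set.mem_setOf_eq, dot] at *
  have h : ∀ e : Edge n, b e * ((s • x + t • y) e)
      = s * (b e * x e) + t * (b e * y e) := by
    intro e; simp only [Pi.add_apply, Pi.smul_apply, smul_eq_mul]; ring
  rw [Finset.sum_congr rfl fun e _ => h e, Finset.sum_add_distrib,
    ← Finset.mul_sum, ← Finset.mul_sum, hx, hy, ← add_mul, hst, one_mul]

lemma convex_coord (e : Edge n) : Convex ℝ {x : Edge n → ℝ | 0 ≤ x e} := by
  intro x hx y hy s t hs ht _
  simp only [Set.mem_setOf_eq, Pi.add_apply, Pi.smul_apply, smul_eq_mul] at *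
  exact add_nonneg (mul_nonneg hs hx) (mul_nonneg ht hy)

lemma stsp_nonneg {x : Edge n → ℝ} (hx : x ∈ stsp n) (e : Edge n) : 0 ≤ x e := by
  refine convexHull_min ?_ (convex_coord e) hx
  rintro y ⟨σ, rfl⟩
  simp only [hamVec, Set.mem_setOf_eq]
  split_ifs <;> norm_num

lemma nextF_eq [NeZero n] (hn : 5 ≤ n) (i : Fin n) : nextF i = i + 1 := by
  apply Fin.ext
  have h1 : 1 % n = 1 := Nat.mod_eq_of_lt (by omega)
  simp [nextF, Fin.add_def, Fin.val_one', h1]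

lemma fin_add_one_ne [NeZero n] (hn : 5 ≤ n) (i : Fin n) : i + 1 ≠ i := by
  intro h
  have hv := congrArg Fin.val h
  have h1 : 1 % n = 1 := Nat.mod_eq_of_lt (by omega)
  rw [Fin.val_add, Fin.val_one', h1] at hv
  have hlt := i.isLt
  rcases Nat.lt_or_ge (i.val + 1) n with hc | hc
  · rw [Nat.mod_eq_of_lt hc] at hv; omega
  · have he : i.val + 1 = n := by omega
    rw [he, Nat.mod_self] at hv; omega

lemma fin_two_ne [NeZero n] (hn : 5 ≤ n) (j : Fin n) : j + 1 ≠ j - 1 := by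
  intro h
  have h2 : j + 1 + 1 = j := by rw [h, sub_add_cancel]
  have hv := congrArg Fin.val h2
  have h1 : 1 % n = 1 := Nat.mod_eq_of_lt (by omega)
  rw [Fin.val_add, Fin.val_add, Fin.val_one', h1, Nat.mod_add_mod] at hv
  have hlt := j.isLt
  rcases Nat.lt_or_ge (j.val + 1 + 1) n with hc | hc
  · rw [Nat.mod_eq_of_lt hc] at hv; omega
  · have h3 : (j.val + 1 + 1) % n = j.val + 1 + 1 - n := by
      rw [Nat.mod_eq_sub_mod hc, Nat.mod_eq_of_lt (by omega)]
    rw [h3] at hv; omega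

lemma degree_ham (hn : 5 ≤ n) (σ : Equiv.Perm (Fin n)) (u : Fin n) :
    dot (delta u) (hamVec σ) = 1 := by
  haveI : NeZero n := ⟨by omega⟩
  classical
  set j : Fin n := σ.symm u with hj
  have hσj : σ j = u := σ.apply_symm_apply u
  have hne1 : σ j ≠ σ (j + 1) := fun h => fin_add_one_ne hn j (σ.injective h).symm
  have hne2 : σ (j - 1) ≠ σ j := by
    intro h
    have := σ.injective h
    have h2 : (j - 1) + 1 = j := sub_add_cancel j 1
    rw [this] at h2
    exact fin_add_one_ne hn j h2
  set e1 : Edge n := ⟨s(σ j, σ (j + 1)), fun hd => hne1 (Sym2.mk_isDiag_iff.mp hd)⟩ with he1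
  set e2 : Edge n := ⟨s(σ (j - 1), σ j), fun hd => hne2 (Sym2.mk_isDiag_iff.mp hd)⟩ with he2
  have he12 : e1 ≠ e2 := by
    intro h
    have hv := congrArg Subtype.val h
    rw [he1, he2] at hv
    simp only at hv
    rw [Sym2.eq_iff] at hv
    rcases hv with ⟨h1, h2⟩ | ⟨h1, h2⟩
    · exact hne2 h1.symm
    · exact fin_two_ne hn j (σ.injective h2)
  have hmem : ∀ e : Edge n,
      (u ∈ e.val ∧ ∃ i, e.val = s(σ i, σ (nextF i))) ↔ (e = e1 ∨ e = e2) := by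
    intro e
    constructor
    · rintro ⟨hu, i, hi⟩
      rw [nextF_eq hn] at hi
      rw [hi, Sym2.mem_iff] at hu
      rcases hu with hu | hu
      · left
        apply Subtype.ext
        have hij : i = j := by rw [hj, hu, Equiv.symm_apply_apply]
        rw [hi, hij, he1]
      · right
        apply Subtype.ext
        have hij : i + 1 = j := by rw [hj, hu, Equiv.symm_apply_apply]
        have hii : i = j - 1 := by rw [← hij, add_sub_cancel_right]
        rw [hi, hii, sub_add_cancel, he2]
    · rintro (rfl | rfl)
      · exact ⟨Sym2.mem_iff.mpr (Or.inl hσj.symm), ⟨j, by rw [nextF_eq hn]⟩⟩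
      · refine ⟨Sym2.mem_iff.mpr (Or.inr hσj.symm), ⟨j - 1, ?_⟩⟩
        rw [nextF_eq hn, sub_add_cancel]
  have hterm : ∀ e : Edge n, delta u e * hamVec σ e
      = if e = e1 ∨ e = e2 then (1/2 : ℝ) else 0 := by
    intro e
    by_cases h : e = e1 ∨ e = e2
    · have hh := (hmem e).mpr h
      rw [if_pos h, delta, hamVec, if_pos hh.1, if_pos hh.2, mul_one]
    · rw [if_neg h, delta, hamVec]
      by_cases h1 : u ∈ e.val
      · rw [if_pos h1, if_neg (fun h2 => h ((hmem e).mp ⟨h1, h2⟩)), mul_zero]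
      · rw [if_neg h1, zero_mul]
  rw [dot, Finset.sum_congr rfl fun e _ => hterm e]
  have hc : ∀ e : Edge n, (if e = e1 ∨ e = e2 then (1/2 : ℝ) else 0)
      = if e ∈ ({e1, e2} : Finset (Edge n)) then (1/2 : ℝ) else 0 := by
    intro e; simp [Finset.mem_insert]
  rw [Finset.sum_congr rfl fun e _ => hc e, Finset.sum_ite_mem, Finset.univ_inter,
    Finset.sum_pair he12]
  norm_num

lemma degree_stsp (hn : 5 ≤ n) {x : Edge n → ℝ} (hx : x ∈ stsp n) (u : Fin n) :
    dot (delta u) x = 1 := by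
  refine convexHull_min ?_ (convex_dot_eq (delta u) 1) hx
  rintro y ⟨σ, rfl⟩
  exact degree_ham hn σ u

lemma dot_theta_eq (a x : Edge n → ℝ) :
    dot (theta a) x = dot a x - ∑ u, lam a u * dot (delta u) x := by
  simp only [dot, theta]
  have h : ∀ e : Edge n, (a e - ∑ u, lam a u * delta u e) * x e
      = a e * x e - ∑ u, lam a u * (delta u e * x e) := by
    intro e
    rw [sub_mul, Finset.sum_mul]
    congr 1
    exact Finset.sum_congr rfl fun u _ => by ring
  rw [Finset.sum_congr rfl fun e _ => h e, Finset.sum_sub_distrib]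
  congr 1
  rw [Finset.sum_comm]
  exact Finset.sum_congr rfl fun u _ => by rw [← Finset.mul_sum]

lemma sum_delta_eq_one (e : Edge n) : ∑ u, delta u e = 1 := by
  obtain ⟨v, w, hne, hvw⟩ := edge_rep e
  have h : ∀ u, delta u e = if u ∈ s(v, w) then (1/2 : ℝ) else 0 := by
    intro u; rw [delta, hvw]
  rw [Finset.sum_congr rfl fun u _ => h u, sum_ite_sym2 hne]
  norm_num

lemma dot_z_eq_zero (a : Edge n → ℝ) (hL : ∀ u, dot (delta u) a = 0) :
    dot a (zvec n) = 0 := by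
  have hs : ∑ e : Edge n, a e = 0 := by
    have h : ∀ e : Edge n, a e = ∑ u, delta u e * a e := by
      intro e; rw [← Finset.sum_mul, sum_delta_eq_one e, one_mul]
    rw [Finset.sum_congr rfl fun e _ => h e, Finset.sum_comm]
    exact Finset.sum_eq_zero fun u _ => hL u
  simp only [dot, zvec]
  rw [← Finset.sum_mul, hs, zero_mul]

lemma count_edges_at (hn : 5 ≤ n) (u : Fin n) :
    ∑ e : Edge n, (if u ∈ e.val then (1 : ℝ) else 0) = (n : ℝ) - 1 := by
  classical
  have step : ∀ e : Edge n, (if u ∈ e.val then (1 : ℝ) else 0)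
      = ∑ v, (if e.val = s(u, v) then (1 : ℝ) else 0) := by
    intro e
    obtain ⟨x, y, hne, hxy⟩ := edge_rep e
    by_cases hu : u ∈ e.val
    · rw [if_pos hu]
      rw [hxy, Sym2.mem_iff] at hu
      rcases hu with rfl | rfl
      · have hcond : ∀ v : Fin n, (e.val = s(u, v)) ↔ v = y := by
          intro v
          rw [hxy, Sym2.eq_iff]
          constructor
          · rintro (⟨-, h⟩ | ⟨-, h⟩)
            · exact h.symm
            · exact absurd h hne.symm
          · rintro rfl; exact Or.inl ⟨rfl, rfl⟩
        rw [Finset.sum_congr rfl fun v _ => if_congr (hcond v) rfl rfl,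
          Finset.sum_ite_eq' Finset.univ y (fun _ => (1 : ℝ)), if_pos (Finset.mem_univ y)]
      · have hcond : ∀ v : Fin n, (e.val = s(u, v)) ↔ v = x := by
          intro v
          rw [hxy, Sym2.eq_iff]
          constructor
          · rintro (⟨h, -⟩ | ⟨h, -⟩)
            · exact absurd h hne
            · exact h.symm
          · rintro rfl; exact Or.inr ⟨rfl, rfl⟩
        rw [Finset.sum_congr rfl fun v _ => if_congr (hcond v) rfl rfl,
          Finset.sum_ite_eq' Finset.univ x (fun _ => (1 : ℝ)), if_pos (Finset.mem_univ x)]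
    · rw [if_neg hu]
      symm
      apply Finset.sum_eq_zero
      intro v _
      rw [if_neg]
      intro h
      exact hu (by rw [h]; exact Sym2.mem_mk_left u v)
  rw [Finset.sum_congr rfl fun e _ => step e, Finset.sum_comm]
  have inner : ∀ v : Fin n, (∑ e : Edge n, if e.val = s(u, v) then (1 : ℝ) else 0)
      = if v = u then 0 else 1 := by
    intro v
    by_cases hv : v = u
    · subst hv
      rw [if_pos rfl]
      apply Finset.sum_eq_zero
      intro e _
      rw [if_neg]
      intro h
      exact e.prop (by rw [h]; exact Sym2.mk_isDiag_iff.mpr rfl)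
    · rw [if_neg hv]
      have hne : u ≠ v := Ne.symm hv
      rw [Finset.sum_eq_single (⟨s(u, v), fun hd => hne (Sym2.mk_isDiag_iff.mp hd)⟩ : Edge n)]
      · rw [if_pos rfl]
      · intro e _ hee
        rw [if_neg]
        intro h
        exact hee (Subtype.ext h)
      · intro h; exact absurd (Finset.mem_univ _) h
  rw [Finset.sum_congr rfl fun v _ => inner v]
  have h : ∀ v : Fin n, (if v = u then (0 : ℝ) else 1)
      = 1 - (if v = u then 1 else 0) := by
    intro v; split_ifs <;> ring
  rw [Finset.sum_congr rfl fun v _ => h v, Finset.sum_sub_distrib, Finset.sum_const,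
    Finset.sum_ite_eq' Finset.univ u (fun _ => (1 : ℝ)), if_pos (Finset.mem_univ u),
    Finset.card_univ, Fintype.card_fin]
  simp

lemma dot_delta_z (hn : 5 ≤ n) (u : Fin n) : dot (delta u) (zvec n) = 1 := by
  simp only [dot, delta, zvec]
  have h : ∀ e : Edge n, (if u ∈ e.val then (1/2 : ℝ) else 0) * (2 / ((n : ℝ) - 1))
      = (if u ∈ e.val then (1 : ℝ) else 0) * (1 / ((n : ℝ) - 1)) := by
    intro e; split_ifs <;> ring
  rw [Finset.sum_congr rfl fun e _ => h e, ← Finset.sum_mul, count_edges_at hn u]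
  have hne : (n : ℝ) - 1 ≠ 0 := by
    have : (5 : ℝ) ≤ n := by exact_mod_cast hn
    linarith
  field_simp

end AuxStmt13

/-- `γ(a) > 0` for all `a ∈ D_S`. -/
theorem stmt13 (n : ℕ) (hn : 5 ≤ n) (a : Edge n → ℝ) (ha : a ∈ DS n) :
    0 < gamma a := by
  obtain ⟨hL, hvalid, ⟨x0, hx0⟩, hgood⟩ := ha
  have hz : dot a (zvec n) = 0 := dot_z_eq_zero a hL
  have hface : ∀ x ∈ faceS a, dot (theta a) x = gamma a := by
    intro x hx
    obtain ⟨hxS, hxa⟩ := hx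
    rw [dot_theta_eq, hxa,
      Finset.sum_congr rfl fun u _ => by rw [degree_stsp hn hxS u, mul_one]]
    simp only [gamma]
    ring
  have hge : 0 ≤ gamma a := by
    rw [← hface x0 hx0]
    exact Finset.sum_nonneg fun e _ => mul_nonneg (theta_nonneg hn a e) (stsp_nonneg hx0.1 e)
  rcases lt_or_eq_of_le hge with h | h
  · exact h
  exfalso
  have hth0 : ∀ e, theta a e = 0 := by
    intro e
    obtain ⟨x, hxF, hxe⟩ := hgood e
    have h0 : dot (theta a) x = 0 := by rw [hface x hxF, ← h]
    have hterm := (Finset.sum_eq_zero_iff_of_nonneg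
      (fun e' _ => mul_nonneg (theta_nonneg hn a e') (stsp_nonneg hxF.1 e'))).mp h0
      e (Finset.mem_univ e)
    rcases mul_eq_zero.mp hterm with h1 | h2
    · exact h1
    · exact absurd h2 (ne_of_gt hxe)
  have ha_eq : ∀ e, a e = ∑ u, lam a u * delta u e := by
    intro e
    have h1 := hth0 e
    simp only [theta] at h1
    linarith
  have h1 : dot a (zvec n) = ∑ u, lam a u := by
    simp only [dot]
    rw [Finset.sum_congr rfl fun e _ => by rw [ha_eq e, Finset.sum_mul], Finset.sum_comm]
    refine Finset.sum_congr rfl fun u _ => ?_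
    have h2 : ∑ e : Edge n, lam a u * delta u e * zvec n e
        = lam a u * dot (delta u) (zvec n) := by
      rw [dot, Finset.mul_sum]
      exact Finset.sum_congr rfl fun e _ => by ring
    rw [h2, dot_delta_z hn u, mul_one]
  have hsum : ∑ u, lam a u = 0 := by rw [← h1, hz]
  rw [gamma, hz, hsum] at h
  norm_num at h

end TSP
end
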